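/- arXiv:1112.1313 — 2 statements merged into one kernel-verified Lean document; each statement's English description precedes it below -/
import Mathlib

section
/- For m ≥ 3 and 1 ≤ s ≤ ⌊(m−1)/2⌋, the minimum size of a target set activating all vertices of the generalized Petersen graph P(m,s) under constant threshold 2 equals ⌈(m+1)/2⌉. -/
/-- Activation closure: `v` eventually becomes active when starting from seed set `S`
in graph `G` with thresholds `θ` (a vertex activates once at least `θ v` of its
neighbors are active). -/
inductive Activated {V : Type*} (G : SimpleGraph V) (θ : V → ℕ) (S : Set V) : V → Prop
  | base {v : V} : v ∈ S → Activated G θ S v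
  | step {v : V} (T : Finset V) (hadj : ∀ u ∈ T, G.Adj u v) (hcard : θ v ≤ T.card)
      (hact : ∀ u ∈ T, Activated G θ S u) : Activated G θ S v

/-- Minimum size of a target set whose activation closure is all of `V`. -/
noncomputable def minSeed {V : Type*} [Fintype V] (G : SimpleGraph V) (θ : V → ℕ) : ℕ :=
  sInf {k | ∃ S : Finset V, S.card = k ∧ ∀ v, Activated G θ (↑S) v}

/-- The generalized Petersen graph `P(m,s)`: outer cycle vertices `v_i = (false, i)`,
inner vertices `u_i = (true, i)`, edges `v_i v_{i+1}`, `u_i v_i`, `u_i u_{i+s}`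
(indices mod `m`). -/
def genPetersen (m s : ℕ) [NeZero m] : SimpleGraph (Bool × ZMod m) :=
  SimpleGraph.fromRel (fun a b =>
    (a.1 = false ∧ b.1 = false ∧ b.2 = a.2 + 1) ∨
    (a.1 = true ∧ b.1 = false ∧ b.2 = a.2) ∨
    (a.1 = true ∧ b.1 = true ∧ b.2 = a.2 + (s : ZMod m)))

set_option linter.unusedSectionVars false
set_option maxHeartbeats 1000000

section
variable {m s : ℕ} [NeZero m]

lemma natCast_ne_zero' {a : ℕ} (h0 : 0 < a) (h1 : a < m) : (a : ZMod m) ≠ 0 := by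
  intro h
  rw [ZMod.natCast_eq_zero_iff] at h
  exact absurd (Nat.le_of_dvd h0 h) (by omega)

lemma natCast_inj' {a b : ℕ} (ha : a < m) (hb : b < m) (h : (a : ZMod m) = b) : a = b := by
  have h1 := ZMod.val_cast_of_lt ha
  rw [h, ZMod.val_cast_of_lt hb] at h1
  omega

variable (hm : 3 ≤ m) (hs1 : 1 ≤ s) (hs2 : s ≤ (m - 1) / 2)

include hm in
lemma one_ne_zero'' : (1 : ZMod m) ≠ 0 := by
  have := natCast_ne_zero' (m := m) (a := 1) one_pos (by omega)
  simpa using this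

include hm in
lemma adj_ff_iff (i j : ZMod m) :
    (genPetersen m s).Adj (false, i) (false, j) ↔ (j = i + 1 ∨ i = j + 1) := by
  rw [genPetersen, SimpleGraph.fromRel_adj]
  simp only [ne_eq, Prod.mk.injEq]
  simp
  rintro (h | h) rfl <;> exact one_ne_zero'' hm (left_eq_add.mp h)

lemma adj_ft_iff (i j : ZMod m) :
    (genPetersen m s).Adj (false, i) (true, j) ↔ i = j := by
  rw [genPetersen, SimpleGraph.fromRel_adj]; simp

lemma adj_tf_iff (i j : ZMod m) :
    (genPetersen m s).Adj (true, i) (false, j) ↔ j = i := by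
  rw [genPetersen, SimpleGraph.fromRel_adj]; simp

include hm hs1 hs2 in
lemma adj_tt_iff (i j : ZMod m) :
    (genPetersen m s).Adj (true, i) (true, j) ↔ (j = i + s ∨ i = j + s) := by
  rw [genPetersen, SimpleGraph.fromRel_adj]
  simp
  rintro (h | h) rfl <;>
    exact natCast_ne_zero' (a := s) hs1 (by omega) (left_eq_add.mp h)

include hm in
lemma adj_vv (i : ZMod m) : (genPetersen m s).Adj (false, i) (false, i + 1) :=
  (adj_ff_iff hm i (i+1)).mpr (Or.inl rfl)

lemma adj_uv (i : ZMod m) : (genPetersen m s).Adj (true, i) (false, i) :=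
  (adj_tf_iff i i).mpr rfl

include hm hs1 hs2 in
lemma adj_uu (i : ZMod m) : (genPetersen m s).Adj (true, i) (true, i + (s : ZMod m)) :=
  (adj_tt_iff hm hs1 hs2 i _).mpr (Or.inl rfl)

instance : DecidableRel (genPetersen m s).Adj := fun _ _ =>
  decidable_of_iff' _ (SimpleGraph.fromRel_adj _ _ _)

include hm in
lemma two_ne_zero'' : ((2:ℕ) : ZMod m) ≠ 0 := natCast_ne_zero' (by norm_num) (by omega)

include hm in
lemma nbr_false (i : ZMod m) : (genPetersen m s).neighborFinset (false, i) =
    {(false, i + 1), (false, i - 1), (true, i)} := by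
  ext ⟨y, j⟩
  rw [SimpleGraph.mem_neighborFinset]
  cases y
  · rw [adj_ff_iff hm]
    simp only [Finset.mem_insert, Finset.mem_singleton, Prod.mk.injEq]
    constructor
    · rintro (rfl | h)
      · tauto
      · exact Or.inr (Or.inl ⟨trivial, by rw [eq_sub_iff_add_eq, ← h]⟩)
    · rintro (⟨-, rfl⟩ | ⟨-, rfl⟩ | ⟨h, -⟩)
      · exact Or.inl rfl
      · exact Or.inr (by rw [sub_add_cancel])
      · simp at h
  · rw [adj_ft_iff]
    simp only [Finset.mem_insert, Finset.mem_singleton, Prod.mk.injEq]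
    constructor
    · rintro rfl; tauto
    · rintro (⟨h, -⟩ | ⟨h, -⟩ | ⟨-, rfl⟩) <;> first | rfl | simp at h

include hm hs1 hs2 in
lemma nbr_true (i : ZMod m) : (genPetersen m s).neighborFinset (true, i) =
    {(true, i + s), (true, i - s), (false, i)} := by
  ext ⟨y, j⟩
  rw [SimpleGraph.mem_neighborFinset]
  cases y
  · rw [adj_tf_iff]
    simp only [Finset.mem_insert, Finset.mem_singleton, Prod.mk.injEq]
    constructor
    · rintro rfl; tauto
    · rintro (⟨h, -⟩ | ⟨h, -⟩ | ⟨-, rfl⟩) <;> first | rfl | simp at h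
  · rw [adj_tt_iff hm hs1 hs2]
    simp only [Finset.mem_insert, Finset.mem_singleton, Prod.mk.injEq]
    constructor
    · rintro (rfl | h)
      · tauto
      · exact Or.inr (Or.inl ⟨trivial, by rw [eq_sub_iff_add_eq, ← h]⟩)
    · rintro (⟨-, rfl⟩ | ⟨-, rfl⟩ | ⟨h, -⟩)
      · exact Or.inl rfl
      · exact Or.inr (by rw [sub_add_cancel])
      · simp at h

include hm hs1 hs2 in
lemma gp_degree (v : Bool × ZMod m) : (genPetersen m s).degree v = 3 := by
  obtain ⟨y, i⟩ := v
  rw [SimpleGraph.degree]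
  cases y
  · rw [nbr_false hm]
    rw [Finset.card_insert_of_notMem, Finset.card_insert_of_notMem, Finset.card_singleton]
    · simp only [Finset.mem_singleton, Prod.mk.injEq]; tauto
    · simp only [Finset.mem_insert, Finset.mem_singleton, Prod.mk.injEq]
      push_neg
      refine ⟨fun _ h => ?_, by tauto⟩
      apply two_ne_zero'' hm
      have : (2 : ZMod m) = 0 := by linear_combination h
      simpa using this
  · rw [nbr_true hm hs1 hs2]
    rw [Finset.card_insert_of_notMem, Finset.card_insert_of_notMem, Finset.card_singleton]
    · simp only [Finset.mem_singleton, Prod.mk.injEq]; tauto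
    · simp only [Finset.mem_insert, Finset.mem_singleton, Prod.mk.injEq]
      push_neg
      refine ⟨fun _ h => ?_, by tauto⟩
      apply natCast_ne_zero' (m := m) (a := 2*s) (by omega) (by omega)
      push_cast
      linear_combination h

include hm hs1 hs2 in
lemma gp_edge_card : (genPetersen m s).edgeFinset.card = 3 * m := by
  have h := SimpleGraph.sum_degrees_eq_twice_card_edges (genPetersen m s)
  have h2 : ∑ v : Bool × ZMod m, (genPetersen m s).degree v = 6 * m := by
    rw [Finset.sum_congr rfl (fun v _ => gp_degree hm hs1 hs2 v)]
    simp [Finset.card_univ, ZMod.card]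
    ring
  omega

end

section UpperBound
variable {m s : ℕ} [NeZero m]

/-- two-active-neighbors step -/
lemma act2 {V : Type*} [DecidableEq V] {G : SimpleGraph V} {θ : V → ℕ} {S : Set V}
    {a b v : V} (hθ : θ v ≤ 2) (hab : a ≠ b) (ha : G.Adj a v) (hb : G.Adj b v)
    (Aa : Activated G θ S a) (Ab : Activated G θ S b) : Activated G θ S v := by
  refine Activated.step ({a, b} : Finset V) ?_ ?_ ?_
  · intro u hu
    rcases Finset.mem_insert.mp hu with rfl | hu
    · exact ha
    · rw [Finset.mem_singleton] at hu; subst hu; exact hb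
  · rw [Finset.card_insert_of_notMem (by simpa using hab), Finset.card_singleton]
    exact hθ
  · intro u hu
    rcases Finset.mem_insert.mp hu with rfl | hu
    · exact Aa
    · rw [Finset.mem_singleton] at hu; subst hu; exact Ab

def seedF (m d : ℕ) [NeZero m] : Finset (Bool × ZMod m) :=
  ((Finset.range d).image fun t => ((true, ((m - d + t : ℕ) : ZMod m)) : Bool × ZMod m)) ∪
  ((Finset.range (m / 2 + 1 - d)).image fun t => ((false, ((2 * t : ℕ) : ZMod m)) : Bool × ZMod m))

def ActU (m s d : ℕ) [NeZero m] : Bool × ZMod m → Prop :=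
  Activated (genPetersen m s) (fun _ => 2) (↑(seedF m d))

variable {d : ℕ} (hm : 3 ≤ m) (hs1 : 1 ≤ s) (hs2 : s ≤ (m - 1) / 2)
  (hd1 : 1 ≤ d) (hds : d ≤ s)

include hd1 in
lemma seed_u (j : ℕ) (h1 : m - d ≤ j) (h2 : j < m) : ActU m s d (true, (j : ZMod m)) := by
  refine Activated.base ?_
  rw [Finset.mem_coe, seedF, Finset.mem_union]
  left
  rw [Finset.mem_image]
  exact ⟨j - (m - d), Finset.mem_range.mpr (by omega), by rw [Prod.mk.injEq]; exact ⟨rfl, by congr 1; omega⟩⟩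

lemma seed_v (t : ℕ) (ht : t < m / 2 + 1 - d) : ActU m s d (false, ((2 * t : ℕ) : ZMod m)) := by
  refine Activated.base ?_
  rw [Finset.mem_coe, seedF, Finset.mem_union]
  right
  rw [Finset.mem_image]
  exact ⟨t, Finset.mem_range.mpr ht, rfl⟩

include hm hs1 hs2 hd1 hds in
lemma act_v_arc (i : ℕ) (hi : i ≤ 2 * (m / 2 - d)) : ActU m s d (false, (i : ZMod m)) := by
  have hdm : d ≤ m / 2 := by omega
  rcases Nat.even_or_odd i with ⟨t, rfl⟩ | ⟨t, rfl⟩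
  · have : t + t = 2 * t := by ring
    rw [this]
    exact seed_v t (by omega)
  · refine act2 le_rfl ?_ ?_ ?_ (seed_v (m := m) (d := d) t (by omega))
      (seed_v (m := m) (d := d) (t+1) (by omega))
    · intro h
      rw [Prod.mk.injEq] at h
      have := natCast_inj' (m := m) (a := 2*t) (b := 2*(t+1)) (by omega) (by omega) h.2
      omega
    · have h := adj_vv (s := s) hm ((2*t : ℕ) : ZMod m)
      have e : ((2*t : ℕ) : ZMod m) + 1 = ((2*t+1 : ℕ) : ZMod m) := by push_cast; ring
      rwa [e] at h
    · have h := (adj_vv (s := s) hm ((2*t+1 : ℕ) : ZMod m)).symm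
      have e : ((2*t+1 : ℕ) : ZMod m) + 1 = ((2*(t+1) : ℕ) : ZMod m) := by push_cast; ring
      rwa [e] at h

include hm hs1 hs2 hd1 hds in
lemma act_v_right (j : ℕ) (h1 : m - d ≤ j) (h2 : j < m) : ActU m s d (false, (j : ZMod m)) := by
  have hdm : d ≤ m / 2 := by omega
  have key : ∀ r j, m - d ≤ j → j < m → m - 1 - j ≤ r → ActU m s d (false, (j : ZMod m)) := by
    intro r
    induction r with
    | zero =>
      intro j hj1 hj2 hj3
      have hj : j = m - 1 := by omega
      subst hj
      refine act2 le_rfl (by simp) ?_ (adj_uv ((m-1 : ℕ) : ZMod m))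
        (seed_v (m := m) (s := s) (d := d) 0 (by omega)) (seed_u hd1 (m-1) (by omega) (by omega))
      · have h := (adj_vv (s := s) hm ((m-1 : ℕ) : ZMod m)).symm
        have e : ((m-1 : ℕ) : ZMod m) + 1 = ((2*0 : ℕ) : ZMod m) := by
          have : ((m-1 : ℕ) : ZMod m) + 1 = ((m-1+1 : ℕ) : ZMod m) := by push_cast; ring
          rw [this]
          have : m - 1 + 1 = m := by omega
          rw [this]
          simp [ZMod.natCast_self]
        rwa [e] at h
    | succ r IH =>
      intro j hj1 hj2 hj3
      rcases Nat.lt_or_ge j (m-1) with hj | hj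
      · refine act2 le_rfl (by simp) ?_ (adj_uv ((j : ℕ) : ZMod m))
          (IH (j+1) (by omega) (by omega) (by omega)) (seed_u hd1 j hj1 hj2)
        · have h := (adj_vv (s := s) hm ((j : ℕ) : ZMod m)).symm
          have e : ((j : ℕ) : ZMod m) + 1 = ((j+1 : ℕ) : ZMod m) := by push_cast; ring
          rwa [e] at h
      · have hj' : j = m - 1 := by omega
        subst hj'
        refine act2 le_rfl (by simp) ?_ (adj_uv ((m-1 : ℕ) : ZMod m))
          (seed_v (m := m) (s := s) (d := d) 0 (by omega)) (seed_u hd1 (m-1) (by omega) (by omega))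
        · have h := (adj_vv (s := s) hm ((m-1 : ℕ) : ZMod m)).symm
          have e : ((m-1 : ℕ) : ZMod m) + 1 = ((2*0 : ℕ) : ZMod m) := by
            have h2 : ((m-1 : ℕ) : ZMod m) + 1 = ((m-1+1 : ℕ) : ZMod m) := by push_cast; ring
            rw [h2]
            have h3 : m - 1 + 1 = m := by omega
            rw [h3]
            simp [ZMod.natCast_self]
          rwa [e] at h
  exact key (m - 1 - j) j h1 h2 le_rfl

include hm hs1 hs2 hd1 hds in
lemma act_v_nogap (z : ZMod m) (h : z.val ≤ 2 * (m / 2 - d) ∨ m - d ≤ z.val) :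
    ActU m s d (false, z) := by
  have hz : ((z.val : ℕ) : ZMod m) = z := ZMod.natCast_rightInverse z
  rcases h with h | h
  · rw [← hz]; exact act_v_arc hm hs1 hs2 hd1 hds z.val h
  · rw [← hz]; exact act_v_right hm hs1 hs2 hd1 hds z.val h (ZMod.val_lt z)

end UpperBound

section Inner
variable {m s d : ℕ} [NeZero m]
  (hm : 3 ≤ m) (hs1 : 1 ≤ s) (hs2 : s ≤ (m - 1) / 2)
  (hd1 : 1 ≤ d) (hds : d ≤ s)

/-- blocked (gap) outer indices -/
def Gap (m d : ℕ) [NeZero m] (z : ZMod m) : Prop :=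
  2 * (m / 2 - d) < z.val ∧ z.val < m - d

include hm hs1 hs2 hd1 hds in
lemma act_v_nogap' (z : ZMod m) (h : ¬ Gap m d z) : ActU m s d (false, z) := by
  have := ZMod.val_lt z
  refine act_v_nogap hm hs1 hs2 hd1 hds z ?_
  rw [Gap] at h
  omega

include hm hs1 hs2 hd1 hds in
lemma act_u_fwd (σ : ℕ) (hσ1 : m - d ≤ σ) (hσ2 : σ < m) (t : ℕ)
    (hgap : ∀ t', 1 ≤ t' → t' ≤ t → ¬ Gap m d ((σ + t' * s : ℕ) : ZMod m)) :
    ActU m s d (true, ((σ + t * s : ℕ) : ZMod m)) := by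
  induction t with
  | zero => simpa using seed_u (s := s) hd1 σ hσ1 hσ2
  | succ t IH =>
    refine act2 le_rfl (by simp) ?_ ?_
      (IH (fun t' h1 h2 => hgap t' h1 (by omega)))
      (act_v_nogap' hm hs1 hs2 hd1 hds _ (hgap (t+1) (by omega) le_rfl))
    · have h := adj_uu hm hs1 hs2 (((σ + t * s : ℕ) : ZMod m))
      have e : ((σ + t * s : ℕ) : ZMod m) + (s : ZMod m) = ((σ + (t+1) * s : ℕ) : ZMod m) := by
        push_cast; ring
      rwa [e] at h
    · exact (adj_uv _).symm

include hm hs1 hs2 hd1 hds in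
lemma act_u_bwd (σ : ℕ) (hσ1 : m - d ≤ σ) (hσ2 : σ < m) (t : ℕ)
    (hgap : ∀ t', 1 ≤ t' → t' ≤ t → ¬ Gap m d ((σ + t' * (m - s) : ℕ) : ZMod m)) :
    ActU m s d (true, ((σ + t * (m - s) : ℕ) : ZMod m)) := by
  induction t with
  | zero => simpa using seed_u (s := s) hd1 σ hσ1 hσ2
  | succ t IH =>
    have ekey : ((σ + (t+1) * (m - s) : ℕ) : ZMod m) + (s : ZMod m)
        = ((σ + t * (m - s) : ℕ) : ZMod m) := by
      have e1 : (σ + (t+1) * (m - s)) + s = (σ + t * (m - s)) + m := by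
        have e2 : (t+1) * (m - s) = t * (m - s) + (m - s) := by ring
        omega
      have e3 := congrArg (fun x : ℕ => (x : ZMod m)) e1
      simp only [Nat.cast_add, ZMod.natCast_self, add_zero] at e3
      rw [Nat.cast_add, Nat.cast_add]
      exact e3
    refine act2 le_rfl (by simp) ?_ ?_
      (IH (fun t' h1 h2 => hgap t' h1 (by omega)))
      (act_v_nogap' hm hs1 hs2 hd1 hds _ (hgap (t+1) (by omega) le_rfl))
    · have h := (adj_uu hm hs1 hs2 (((σ + (t+1) * (m - s) : ℕ) : ZMod m))).symm
      rwa [ekey] at h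
    · exact (adj_uv _).symm

lemma mds_eq (hd : d = Nat.gcd m s) : (m / d) * s = m * (s / d) := by
  have hdm : d ∣ m := hd ▸ Nat.gcd_dvd_left m s
  have hdss : d ∣ s := hd ▸ Nat.gcd_dvd_right m s
  calc (m / d) * s = (m / d) * (d * (s / d)) := by rw [Nat.mul_div_cancel' hdss]
    _ = ((m / d) * d) * (s / d) := by ring
    _ = m * (s / d) := by rw [Nat.div_mul_cancel hdm]

lemma ord_s (hd : d = Nat.gcd m s) (t : ℕ) : m ∣ t * s ↔ (m / d) ∣ t := by
  have hdm : d ∣ m := hd ▸ Nat.gcd_dvd_left m s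
  have hdss : d ∣ s := hd ▸ Nat.gcd_dvd_right m s
  have hm0 : 0 < m := Nat.pos_of_ne_zero (NeZero.ne m)
  have hd0 : 0 < d := hd ▸ Nat.gcd_pos_of_pos_left s hm0
  constructor
  · intro h
    have e1 : t * s = (t * (s / d)) * d := by
      rw [mul_assoc, Nat.div_mul_cancel hdss]
    have e2 : m = (m / d) * d := (Nat.div_mul_cancel hdm).symm
    rw [e2, e1] at h
    have h2 : m / d ∣ t * (s / d) := (Nat.mul_dvd_mul_iff_right hd0).mp h
    have hco : (m / d).Coprime (s / d) := by
      rw [hd]; exact Nat.coprime_div_gcd_div_gcd (Nat.gcd_pos_of_pos_left s hm0)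
    exact hco.dvd_of_dvd_mul_right h2
  · rintro ⟨c, rfl⟩
    refine ⟨(s / d) * c, ?_⟩
    calc (m / d) * c * s = ((m / d) * s) * c := by ring
      _ = (m * (s / d)) * c := by rw [mds_eq hd]
      _ = m * ((s / d) * c) := by ring

lemma cast_mds_zero (hd : d = Nat.gcd m s) : (((m / d) * s : ℕ) : ZMod m) = 0 := by
  rw [ZMod.natCast_eq_zero_iff]
  exact (ord_s hd (m / d)).mpr dvd_rfl

lemma cast_bwd (hd : d = Nat.gcd m s) (hsm : s ≤ m) (σ t : ℕ) (ht : t ≤ m / d) :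
    ((σ + (m / d - t) * (m - s) : ℕ) : ZMod m) = ((σ + t * s : ℕ) : ZMod m) := by
  set q := m / d - t with hq
  have hA : q * s ≤ q * m := Nat.mul_le_mul_left q hsm
  have hB : (m / d) * s = q * s + t * s := by
    rw [hq, ← Nat.add_mul]
    congr 1
    omega
  have hC : q * (m - s) = q * m - q * s := Nat.mul_sub q m s
  have e : σ + q * (m - s) + (m / d) * s = (σ + t * s) + q * m := by omega
  have e2 := congrArg (fun x : ℕ => (x : ZMod m)) e
  simp only [Nat.cast_add] at e2
  rw [cast_mds_zero hd, add_zero] at e2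
  have z2 : ((q * m : ℕ) : ZMod m) = 0 := by
    rw [ZMod.natCast_eq_zero_iff]
    exact Dvd.intro q (mul_comm m q)
  rw [z2, add_zero] at e2
  rw [← Nat.cast_add, ← Nat.cast_add] at e2
  exact e2

end Inner
section Inner2
variable {m s d : ℕ} [NeZero m]
  (hm : 3 ≤ m) (hs1 : 1 ≤ s) (hs2 : s ≤ (m - 1) / 2)
  (hd1 : 1 ≤ d) (hds : d ≤ s)

lemma exists_t (hd : d = Nat.gcd m s) (z : ZMod m) :
    ∃ σ t : ℕ, m - d ≤ σ ∧ σ < m ∧ t < m / d ∧ z = ((σ + t * s : ℕ) : ZMod m) := by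
  have hdm : d ∣ m := hd ▸ Nat.gcd_dvd_left m s
  have hm0 : 0 < m := Nat.pos_of_ne_zero (NeZero.ne m)
  have hd0 : 0 < d := hd ▸ Nat.gcd_pos_of_pos_left s hm0
  have hdlem : d ≤ m := Nat.le_of_dvd hm0 hdm
  have hmd0 : 0 < m / d := Nat.div_pos hdlem hd0
  set σ : ℕ := m - d + z.val % d with hσ
  have hσ1 : m - d ≤ σ := by omega
  have hmodlt : z.val % d < d := Nat.mod_lt _ hd0
  have hσ2 : σ < m := by omega
  -- z.val - σ = d * c over ℤ
  set c : ℤ := ((z.val / d : ℕ) : ℤ) + 1 - ((m / d : ℕ) : ℤ) with hc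
  have e1 : d * (z.val / d) + z.val % d = z.val := Nat.div_add_mod z.val d
  have e2 : d * (m / d) = m := Nat.mul_div_cancel' hdm
  have e1' : (d : ℤ) * ((z.val / d : ℕ) : ℤ) + ((z.val % d : ℕ) : ℤ) = (z.val : ℤ) := by
    exact_mod_cast e1
  have e2' : (d : ℤ) * ((m / d : ℕ) : ℤ) = (m : ℤ) := by exact_mod_cast e2
  have hσ' : (σ : ℤ) = (m : ℤ) - d + ((z.val % d : ℕ) : ℤ) := by
    rw [hσ]; push_cast [Nat.cast_sub hdlem]; ring
  have hzc : ((z.val : ℤ) - σ) = d * c := by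
    rw [hσ', hc]; linear_combination e2' - e1'
  have hbez : (d : ℤ) = m * Int.gcdA m s + s * Int.gcdB m s := by
    have hb := Int.gcd_eq_gcd_ab (m : ℤ) (s : ℤ)
    rwa [Int.gcd_natCast_natCast, ← hd] at hb
  set tZ : ℤ := c * Int.gcdB m s with htZ
  have hmod : tZ * (s : ℤ) ≡ (z.val : ℤ) - σ [ZMOD (m : ℤ)] := by
    have hdvd : (m : ℤ) ∣ ((z.val : ℤ) - σ) - tZ * s := by
      refine ⟨c * Int.gcdA m s, ?_⟩
      rw [hzc, htZ]
      linear_combination c * hbez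
    exact Int.modEq_iff_dvd.mpr hdvd
  set t1 : ℕ := (tZ % (m : ℤ)).toNat with ht1
  have ht1' : (t1 : ℤ) = tZ % (m : ℤ) := by
    rw [ht1]
    exact Int.toNat_of_nonneg (Int.emod_nonneg tZ (by exact_mod_cast hm0.ne'))
  have ht1mod : (t1 : ℤ) ≡ tZ [ZMOD (m : ℤ)] := by
    rw [Int.ModEq, ht1']
    exact Int.emod_emod_of_dvd tZ dvd_rfl
  have hcast1 : ((t1 * s : ℕ) : ZMod m) = z - ((σ : ℕ) : ZMod m) := by
    have h1 : ((t1 * s : ℕ) : ZMod m) = (((t1 : ℤ) * s : ℤ) : ZMod m) := by push_cast; ring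
    have h2 : z - ((σ : ℕ) : ZMod m) = ((((z.val : ℤ) - σ) : ℤ) : ZMod m) := by
      push_cast
      rw [ZMod.natCast_rightInverse z]
    rw [h1, h2]
    exact (ZMod.intCast_eq_intCast_iff _ _ _).mpr ((ht1mod.mul_right (s : ℤ)).trans hmod)
  set t : ℕ := t1 % (m / d) with ht
  have hcast2 : ((t * s : ℕ) : ZMod m) = ((t1 * s : ℕ) : ZMod m) := by
    have e : t1 * s = t * s + ((m / d) * (t1 / (m / d))) * s := by
      have e0 := Nat.div_add_mod t1 (m / d)
      calc t1 * s = ((m / d) * (t1 / (m / d)) + t) * s := by rw [ht, e0]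
        _ = t * s + ((m / d) * (t1 / (m / d))) * s := by ring
    have z0 : ((((m / d) * (t1 / (m / d))) * s : ℕ) : ZMod m) = 0 := by
      rw [ZMod.natCast_eq_zero_iff]
      exact (ord_s hd _).mpr ⟨t1 / (m / d), rfl⟩
    rw [e, Nat.cast_add, z0, add_zero]
  refine ⟨σ, t, hσ1, hσ2, Nat.mod_lt _ hmd0, ?_⟩
  rw [Nat.cast_add, hcast2, hcast1]
  ring

include hm hs1 hs2 hd1 hds in
lemma gap_unique (hd : d = Nat.gcd m s) (σ : ℕ) {t1 t2 : ℕ} (h1 : t1 < m / d) (h2 : t2 < m / d)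
    (g1 : Gap m d ((σ + t1 * s : ℕ) : ZMod m)) (g2 : Gap m d ((σ + t2 * s : ℕ) : ZMod m)) :
    t1 = t2 := by
  have hdm : d ∣ m := hd ▸ Nat.gcd_dvd_left m s
  have hdss : d ∣ s := hd ▸ Nat.gcd_dvd_right m s
  have hm0 : 0 < m := Nat.pos_of_ne_zero (NeZero.ne m)
  have hdlem : d ≤ m := Nat.le_of_dvd hm0 hdm
  set w1 := (((σ + t1 * s : ℕ) : ZMod m)).val with hw1
  set w2 := (((σ + t2 * s : ℕ) : ZMod m)).val with hw2
  obtain ⟨g1a, g1b⟩ := g1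
  obtain ⟨g2a, g2b⟩ := g2
  have hmo1 : w1 ≡ σ + t1 * s [MOD m] := by rw [hw1, ZMod.val_natCast]; exact Nat.mod_modEq _ m
  have hmo2 : w2 ≡ σ + t2 * s [MOD m] := by rw [hw2, ZMod.val_natCast]; exact Nat.mod_modEq _ m
  -- w1 ≡ w2 mod d
  have cross : w1 + (σ + t2 * s) ≡ (σ + t1 * s) + w2 [MOD m] := hmo1.add hmo2.symm
  have crossd : w1 + (σ + t2 * s) ≡ (σ + t1 * s) + w2 [MOD d] := cross.of_dvd hdm
  have ets : ∀ t' : ℕ, t' * s ≡ 0 [MOD d] :=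
    fun t' => (Nat.modEq_zero_iff_dvd).mpr (Dvd.dvd.mul_left hdss t')
  have hcd : σ + t2 * s ≡ σ + t1 * s [MOD d] :=
    (Nat.ModEq.refl σ).add ((ets t2).trans (ets t1).symm)
  have hw : w1 ≡ w2 [MOD d] := by
    refine Nat.ModEq.add_right_cancel hcd ?_
    calc w1 + (σ + t2 * s) ≡ (σ + t1 * s) + w2 [MOD d] := crossd
      _ = w2 + (σ + t1 * s) := by ring
  have hweq : w1 = w2 := by
    rcases le_total w1 w2 with hle | hle
    · have hdvd := (Nat.modEq_iff_dvd' hle).mp hw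
      have : w2 - w1 = 0 := Nat.eq_zero_of_dvd_of_lt hdvd (by omega) |>.symm ▸ rfl
      omega
    · have hdvd := (Nat.modEq_iff_dvd' hle).mp hw.symm
      have : w1 - w2 = 0 := Nat.eq_zero_of_dvd_of_lt hdvd (by omega) |>.symm ▸ rfl
      omega
  have hsame : σ + t1 * s ≡ σ + t2 * s [MOD m] := hmo1.symm.trans (hweq ▸ hmo2)
  have hts : t1 * s ≡ t2 * s [MOD m] := Nat.ModEq.add_left_cancel' σ hsame
  have key : ∀ a b : ℕ, a < m / d → b < m / d → a * s ≡ b * s [MOD m] → a ≤ b → a = b := by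
    intro a b ha hb hab hle
    have hdvd := (Nat.modEq_iff_dvd' (Nat.mul_le_mul_right s hle)).mp hab
    rw [← Nat.sub_mul] at hdvd
    have := (ord_s hd (b - a)).mp hdvd
    have hz : b - a = 0 := Nat.eq_zero_of_dvd_of_lt this (by omega) |>.symm ▸ rfl
    omega
  rcases le_total t1 t2 with hle | hle
  · exact key t1 t2 h1 h2 hts hle
  · exact (key t2 t1 h2 h1 hts.symm hle).symm

end Inner2
section Inner3
variable {m s d : ℕ} [NeZero m]
  (hm : 3 ≤ m) (hs1 : 1 ≤ s) (hs2 : s ≤ (m - 1) / 2)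
  (hd1 : 1 ≤ d) (hds : d ≤ s)

include hm hs1 hs2 hd1 hds in
lemma act_u_all (hd : d = Nat.gcd m s) (z : ZMod m) : ActU m s d (true, z) := by
  have hm0 : 0 < m := Nat.pos_of_ne_zero (NeZero.ne m)
  have hsm : s < m := by omega
  have h2s : 2 * s < m := by omega
  obtain ⟨σ, t, hσ1, hσ2, ht, rfl⟩ := exists_t (s := s) hd z
  by_cases hblocked : ∃ t', t' ≤ t ∧ Gap m d ((σ + t' * s : ℕ) : ZMod m)
  · obtain ⟨t0, ht0le, ht0gap⟩ := hblocked
    have ht0lt : t0 < m / d := lt_of_le_of_lt ht0le ht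
    have huniq : ∀ t', t' < m / d → Gap m d ((σ + t' * s : ℕ) : ZMod m) → t' = t0 :=
      fun t' h1' h2' => gap_unique hm hs1 hs2 hd1 hds hd σ h1' ht0lt h2' ht0gap
    have ht01 : 1 ≤ t0 := by
      by_contra hcon
      push_neg at hcon
      have h0 : t0 = 0 := by omega
      subst h0
      obtain ⟨ga, gb⟩ := ht0gap
      rw [ZMod.val_natCast] at gb
      have : (σ + 0 * s) % m = σ := by
        rw [Nat.zero_mul, Nat.add_zero]
        exact Nat.mod_eq_of_lt hσ2
      omega
    rcases eq_or_ne t t0 with heq | hne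
    · -- t itself is the blocked index: use the two inner neighbours
      obtain ⟨t', rfl⟩ : ∃ t', t = t' + 1 := ⟨t - 1, by omega⟩
      have hn1 : ActU m s d (true, ((σ + t' * s : ℕ) : ZMod m)) := by
        refine act_u_fwd hm hs1 hs2 hd1 hds σ hσ1 hσ2 t' (fun ta h1 h2 hgap => ?_)
        have := huniq ta (by omega) hgap
        omega
      have hn2 : ActU m s d (true, ((σ + (t' + 2) * s : ℕ) : ZMod m)) := by
        rcases eq_or_lt_of_le (Nat.succ_le_of_lt ht) with heq2 | hlt2
        · -- t'+2 = m/d : wraps around to the seed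
          have e : ((σ + (t' + 2) * s : ℕ) : ZMod m) = ((σ : ℕ) : ZMod m) := by
            rw [show t' + 2 = m / d from heq2.symm ▸ rfl, Nat.cast_add, cast_mds_zero hd, add_zero]
          rw [e]
          exact seed_u hd1 σ hσ1 hσ2
        · set tb := m / d - (t' + 2) with htb
          have hbwd : ActU m s d (true, ((σ + tb * (m - s) : ℕ) : ZMod m)) := by
            refine act_u_bwd hm hs1 hs2 hd1 hds σ hσ1 hσ2 tb (fun ta h1 h2 => ?_)
            have e := cast_bwd (s := s) hd hsm.le σ (m / d - ta) (by omega)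
            rw [show m / d - (m / d - ta) = ta by omega] at e
            rw [e]
            intro hgap
            have := huniq (m / d - ta) (by omega) hgap
            omega
          have e2 := cast_bwd (s := s) hd hsm.le σ (t' + 2) (by omega)
          rw [← htb] at e2
          rwa [e2] at hbwd
      refine act2 le_rfl ?_ ?_ ?_ hn1 hn2
      · intro hcon
        rw [Prod.mk.injEq] at hcon
        have hcast := hcon.2
        rw [ZMod.natCast_eq_natCast_iff] at hcast
        have hc2 := Nat.ModEq.add_left_cancel' σ hcast
        have hdvd := (Nat.modEq_iff_dvd' (Nat.mul_le_mul_right s (by omega))).mp hc2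
        rw [← Nat.sub_mul, show t' + 2 - t' = 2 by omega] at hdvd
        have := Nat.le_of_dvd (by omega) hdvd
        omega
      · have h := adj_uu hm hs1 hs2 (((σ + t' * s : ℕ) : ZMod m))
        have e : ((σ + t' * s : ℕ) : ZMod m) + (s : ZMod m) = ((σ + (t'+1) * s : ℕ) : ZMod m) := by
          push_cast; ring
        rwa [e] at h
      · have h := (adj_uu hm hs1 hs2 (((σ + (t'+1) * s : ℕ) : ZMod m))).symm
        have e : ((σ + (t'+1) * s : ℕ) : ZMod m) + (s : ZMod m)
            = ((σ + (t'+2) * s : ℕ) : ZMod m) := by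
          push_cast; ring
        rwa [e] at h
    · -- t is not blocked: go backwards around the cycle
      have ht0t : t0 < t := by omega
      set tb := m / d - t with htb
      have hbwd : ActU m s d (true, ((σ + tb * (m - s) : ℕ) : ZMod m)) := by
        refine act_u_bwd hm hs1 hs2 hd1 hds σ hσ1 hσ2 tb (fun ta h1 h2 => ?_)
        have e := cast_bwd (s := s) hd hsm.le σ (m / d - ta) (by omega)
        rw [show m / d - (m / d - ta) = ta by omega] at e
        rw [e]
        intro hgap
        have := huniq (m / d - ta) (by omega) hgap
        omega
      have e2 := cast_bwd (s := s) hd hsm.le σ t ht.le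
      rw [← htb] at e2
      rwa [e2] at hbwd
  · push_neg at hblocked
    exact act_u_fwd hm hs1 hs2 hd1 hds σ hσ1 hσ2 t (fun t' _ h2 => hblocked t' h2)

include hm hs1 hs2 hd1 hds in
lemma act_v_gap' (hd : d = Nat.gcd m s) :
    ∀ j, 2 * (m / 2 - d) < j → j < m - d → ActU m s d (false, (j : ZMod m)) := by
  intro j
  induction j using Nat.strong_induction_on with
  | _ j IH =>
    intro hj1 hj2
    have hj0 : 1 ≤ j := by omega
    have hadj : (genPetersen m s).Adj (false, ((j - 1 : ℕ) : ZMod m)) (false, ((j : ℕ) : ZMod m)) := by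
      have h := adj_vv (s := s) hm (((j - 1 : ℕ) : ZMod m))
      have e : ((j - 1 : ℕ) : ZMod m) + 1 = ((j : ℕ) : ZMod m) := by
        rw [show ((j - 1 : ℕ) : ZMod m) + 1 = ((j - 1 + 1 : ℕ) : ZMod m) by push_cast; ring,
          show j - 1 + 1 = j by omega]
      rwa [e] at h
    have hAa : ActU m s d (false, ((j - 1 : ℕ) : ZMod m)) := by
      rcases Nat.lt_or_ge (2 * (m / 2 - d)) (j - 1) with h | h
      · exact IH (j - 1) (by omega) h (by omega)
      · exact act_v_arc hm hs1 hs2 hd1 hds (j - 1) h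
    exact act2 le_rfl (by simp) hadj (adj_uv ((j : ℕ) : ZMod m)) hAa
      (act_u_all hm hs1 hs2 hd1 hds hd ((j : ℕ) : ZMod m))

include hm hs1 hs2 hd1 hds in
lemma act_all (hd : d = Nat.gcd m s) (v : Bool × ZMod m) : ActU m s d v := by
  obtain ⟨y, z⟩ := v
  cases y
  · by_cases hg : Gap m d z
    · have hz : ((z.val : ℕ) : ZMod m) = z := ZMod.natCast_rightInverse z
      rw [← hz]
      exact act_v_gap' hm hs1 hs2 hd1 hds hd z.val hg.1 hg.2
    · exact act_v_nogap' hm hs1 hs2 hd1 hds z hg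
  · exact act_u_all hm hs1 hs2 hd1 hds hd z

lemma seedF_card (hm : 3 ≤ m) (hd1 : 1 ≤ d) (hdm2 : d ≤ m / 2) :
    (seedF m d).card = m / 2 + 1 := by
  have hdm : d ≤ m := by omega
  rw [seedF]
  rw [Finset.card_union_of_disjoint]
  · rw [Finset.card_image_of_injOn, Finset.card_image_of_injOn, Finset.card_range,
      Finset.card_range]
    · omega
    · intro t1 h1 t2 h2 h
      rw [Finset.mem_coe, Finset.mem_range] at h1 h2
      rw [Prod.mk.injEq] at h
      have := natCast_inj' (m := m) (a := 2 * t1) (b := 2 * t2) (by omega) (by omega) h.2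
      omega
    · intro t1 h1 t2 h2 h
      rw [Finset.mem_coe, Finset.mem_range] at h1 h2
      rw [Prod.mk.injEq] at h
      have := natCast_inj' (m := m) (a := m - d + t1) (b := m - d + t2) (by omega) (by omega) h.2
      omega
  · rw [Finset.disjoint_left]
    rintro ⟨y, z⟩ ha hb
    rw [Finset.mem_image] at ha hb
    obtain ⟨x1, -, h1⟩ := ha
    obtain ⟨x2, -, h2⟩ := hb
    rw [← h2] at h1
    simp at h1

lemma minSeed_le_half (hm : 3 ≤ m) (hs1 : 1 ≤ s) (hs2 : s ≤ (m - 1) / 2) :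
    minSeed (genPetersen m s) (fun _ => 2) ≤ (m + 2) / 2 := by
  have hm0 : 0 < m := by omega
  set d := Nat.gcd m s with hd
  have hd1 : 1 ≤ d := Nat.gcd_pos_of_pos_left s hm0
  have hds : d ≤ s := Nat.gcd_le_right (n := s) m (by omega)
  apply Nat.sInf_le
  refine ⟨seedF m d, ?_, fun v => act_all hm hs1 hs2 hd1 hds hd v⟩
  rw [seedF_card hm hd1 (by omega)]
  omega

end Inner3
section LowerBound
variable {V : Type*}

def ActN (G : SimpleGraph V) (θ : V → ℕ) (S : Set V) : ℕ → V → Prop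
  | 0 => fun v => v ∈ S
  | (n+1) => fun v => ActN G θ S n v ∨
      ∃ T : Finset V, (∀ u ∈ T, G.Adj u v) ∧ θ v ≤ T.card ∧ ∀ u ∈ T, ActN G θ S n u

lemma actN_mono {G : SimpleGraph V} {θ : V → ℕ} {S : Set V} {n n' : ℕ} {v : V}
    (hle : n ≤ n') (h : ActN G θ S n v) : ActN G θ S n' v := by
  induction n' with
  | zero =>
    have : n = 0 := by omega
    subst this; exact h
  | succ k IH =>
    by_cases hnk : n = k + 1
    · subst hnk; exact h
    · exact Or.inl (IH (by omega))

lemma activated_iff_actN {G : SimpleGraph V} {θ : V → ℕ} {S : Set V} {v : V} :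
    Activated G θ S v ↔ ∃ n, ActN G θ S n v := by
  constructor
  · intro h
    induction h with
    | base hv => exact ⟨0, hv⟩
    | step T hadj hcard hact IH =>
      choose f hf using IH
      refine ⟨(T.attach.sup fun u => f u.1 u.2) + 1,
        Or.inr ⟨T, hadj, hcard, fun u hu => ?_⟩⟩
      exact actN_mono (Finset.le_sup (f := fun u : {x // x ∈ T} => f u.1 u.2)
        (Finset.mem_attach T ⟨u, hu⟩)) (hf u hu)
  · rintro ⟨n, hn⟩
    induction n generalizing v with
    | zero => exact Activated.base hn
    | succ k IH =>
      rcases hn with h | ⟨T, hadj, hcard, hc⟩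
      · exact IH h
      · exact Activated.step T hadj hcard (fun u hu => IH (hc u hu))

noncomputable def rnk (G : SimpleGraph V) (θ : V → ℕ) (S : Set V) (v : V) : ℕ :=
  sInf {n | ActN G θ S n v}

lemma lower_bound_general [Fintype V] [DecidableEq V] (G : SimpleGraph V) [DecidableRel G.Adj]
    (hdeg : ∀ v, G.degree v = 3) (S : Finset V)
    (hact : ∀ v, Activated G (fun _ => 2) (↑S) v) :
    (Finset.univ \ S) = ∅ ∨ 2 * (Finset.univ \ S).card + 1 ≤ G.edgeFinset.card := by
  classical
  by_cases hA : (Finset.univ \ S) = ∅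
  · exact Or.inl hA
  right
  set θ : V → ℕ := fun _ => 2 with hθ
  set A := Finset.univ \ S with hAdef
  have hAne : A.Nonempty := Finset.nonempty_iff_ne_empty.mpr hA
  have hex : ∀ v, ∃ n, ActN G θ (↑S) n v := fun v => activated_iff_actN.mp (hact v)
  set r : V → ℕ := rnk G θ (↑S) with hr
  have hrmem : ∀ v, ActN G θ (↑S) (r v) v := fun v => Nat.sInf_mem (hex v)
  have hT : ∀ v, ∃ T : Finset V, v ∈ A →
      T ⊆ G.neighborFinset v ∧ T.card = 2 ∧ ∀ u ∈ T, r u < r v := by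
    intro v
    by_cases hv : v ∈ A
    swap
    · exact ⟨∅, fun h => absurd h hv⟩
    have hvS : v ∉ S := (Finset.mem_sdiff.mp hv).2
    have h0 : r v ≠ 0 := by
      intro h
      have h2 := hrmem v
      rw [h] at h2
      exact hvS h2
    obtain ⟨n, hn⟩ : ∃ n, r v = n + 1 := ⟨r v - 1, by omega⟩
    have hstep := hrmem v
    rw [hn] at hstep
    rcases hstep with h | ⟨T, hadj, hcard, hc⟩
    · exfalso
      have : r v ≤ n := Nat.sInf_le h
      omega
    · obtain ⟨T', hT'sub, hT'card⟩ := Finset.exists_subset_card_eq hcard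
      refine ⟨T', fun _ => ⟨fun u hu => (G.mem_neighborFinset v u).mpr
        ((hadj u (hT'sub hu)).symm), hT'card, fun u hu => ?_⟩⟩
      have : r u ≤ n := Nat.sInf_le (hc u (hT'sub hu))
      omega
  choose Tf hTf using hT
  obtain ⟨w, hwA, hwmax⟩ := Finset.exists_max_image A r hAne
  obtain ⟨hTsub, hTcard, hTlt⟩ := hTf w hwA
  have hdegw : (G.neighborFinset w).card = 3 := hdeg w
  have hxext : ((G.neighborFinset w) \ Tf w).Nonempty := by
    rw [← Finset.card_pos, Finset.card_sdiff_of_subset hTsub, hdegw, hTcard]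
    omega
  obtain ⟨x, hx⟩ := hxext
  rw [Finset.mem_sdiff] at hx
  set F : Finset (Sym2 V) := A.biUnion (fun v => (Tf v).image (fun u => s(u, v))) with hF
  have hinj : ∀ v ∈ A, ((Tf v).image (fun u => s(u, v))).card = 2 := by
    intro v hv
    obtain ⟨hsub', hcard', hlt'⟩ := hTf v hv
    rw [Finset.card_image_of_injOn, hcard']
    intro u1 h1 u2 h2 heq
    rcases Sym2.eq_iff.mp heq with ⟨h, -⟩ | ⟨h1', h2'⟩
    · exact h
    · exfalso
      subst h1'
      exact absurd (hlt' _ h1) (lt_irrefl _)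
  have hdisj : ∀ v1 ∈ A, ∀ v2 ∈ A, v1 ≠ v2 →
      Disjoint ((Tf v1).image (fun u => s(u, v1))) ((Tf v2).image (fun u => s(u, v2))) := by
    intro v1 h1 v2 h2 hne
    rw [Finset.disjoint_left]
    intro e he1 he2
    rw [Finset.mem_image] at he1 he2
    obtain ⟨u1, hu1, he1⟩ := he1
    obtain ⟨u2, hu2, he2⟩ := he2
    rw [← he2] at he1
    rcases Sym2.eq_iff.mp he1 with ⟨-, hv⟩ | ⟨ha, hb⟩
    · exact hne hv
    · have l1 := (hTf v1 h1).2.2 u1 hu1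
      have l2 := (hTf v2 h2).2.2 u2 hu2
      rw [ha] at l1
      rw [← hb] at l2
      omega
  have hcardF : F.card = 2 * A.card := by
    rw [hF, Finset.card_biUnion hdisj, Finset.sum_congr rfl hinj, Finset.sum_const,
      smul_eq_mul, mul_comm]
  have hxF : s(x, w) ∉ F := by
    intro hmem
    rw [hF, Finset.mem_biUnion] at hmem
    obtain ⟨v, hvA, hmem⟩ := hmem
    rw [Finset.mem_image] at hmem
    obtain ⟨u, hu, heq⟩ := hmem
    rcases Sym2.eq_iff.mp heq with ⟨hux, hvw⟩ | ⟨huw, hvx⟩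
    · subst hvw; subst hux
      exact hx.2 hu
    · have l1 := (hTf v hvA).2.2 u hu
      have l2 := hwmax v hvA
      rw [huw, hvx] at l1
      rw [hvx] at l2
      omega
  have hsub : insert s(x, w) F ⊆ G.edgeFinset := by
    intro e he
    rcases Finset.mem_insert.mp he with rfl | he
    · rw [SimpleGraph.mem_edgeFinset, SimpleGraph.mem_edgeSet]
      exact ((G.mem_neighborFinset w x).mp hx.1).symm
    · rw [hF, Finset.mem_biUnion] at he
      obtain ⟨v, hvA, hmem⟩ := he
      rw [Finset.mem_image] at hmem
      obtain ⟨u, hu, heq⟩ := hmem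
      rw [← heq, SimpleGraph.mem_edgeFinset, SimpleGraph.mem_edgeSet]
      exact ((G.mem_neighborFinset v u).mp ((hTf v hvA).1 hu)).symm
  have hcardins : (insert s(x, w) F).card = 2 * A.card + 1 := by
    rw [Finset.card_insert_of_notMem hxF, hcardF]
  calc 2 * A.card + 1 = (insert s(x, w) F).card := hcardins.symm
    _ ≤ G.edgeFinset.card := Finset.card_le_card hsub

end LowerBound

/-- For `m ≥ 3` and `1 ≤ s ≤ ⌊(m-1)/2⌋`, `min-seed(P(m,s), 2) = ⌈(m+1)/2⌉`. -/
theorem minSeed_genPetersen (m s : ℕ) [NeZero m] (hm : 3 ≤ m)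
    (hs1 : 1 ≤ s) (hs2 : s ≤ (m - 1) / 2) :
    minSeed (genPetersen m s) (fun _ => 2) = (m + 2) / 2 := by
  have hcardV : Fintype.card (Bool × ZMod m) = 2 * m := by
    rw [Fintype.card_prod, Fintype.card_bool, ZMod.card]
  refine le_antisymm (minSeed_le_half hm hs1 hs2) ?_
  rw [minSeed]
  refine le_csInf ?_ ?_
  · set d := Nat.gcd m s with hd
    have hm0 : 0 < m := by omega
    have hd1 : 1 ≤ d := Nat.gcd_pos_of_pos_left s hm0
    have hds : d ≤ s := Nat.gcd_le_right (n := s) m (by omega)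
    exact ⟨(seedF m d).card, seedF m d, rfl, fun v => act_all hm hs1 hs2 hd1 hds hd v⟩
  · rintro k ⟨S, hcard, hact⟩
    rcases lower_bound_general (genPetersen m s) (gp_degree hm hs1 hs2) S hact with h | h
    · have hsub : Finset.univ ⊆ S := by
        intro v hv
        by_contra hvS
        have hmem : v ∈ Finset.univ \ S := Finset.mem_sdiff.mpr ⟨hv, hvS⟩
        rw [h] at hmem
        exact absurd hmem (Finset.notMem_empty v)
      have hle := Finset.card_le_card hsub
      rw [Finset.card_univ, hcardV, hcard] at hle
      omega
    · rw [Finset.card_univ_diff, hcardV, hcard, gp_edge_card hm hs1 hs2] at h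
      omega
end

section
/- If m ≥ 5 is odd and s ≥ 2, then min-seed(C_m ⊘ C_{3s}, 3) = ms + 1. -/
/-- The torus cordalis `C_m ⊘ C_n` on vertices `(i,j)`, `i : ZMod m`, `j : Fin n`
(`j` playing the role of `1,…,n`): edges `(i,j)(i±1,j)`, `(i,j)(i,j+1)` for `j < n`,
and the shifted wrap-around edge `(i,n)(i+1,1)`. -/
def torusCordalis (m n : ℕ) [NeZero m] : SimpleGraph (ZMod m × Fin n) :=
  SimpleGraph.fromRel (fun a b =>
    (b.1 = a.1 + 1 ∧ b.2 = a.2) ∨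
    (a.1 = b.1 ∧ (b.2 : ℕ) = (a.2 : ℕ) + 1) ∨
    ((a.2 : ℕ) = n - 1 ∧ (b.2 : ℕ) = 0 ∧ b.1 = a.1 + 1))


open Finset

section General
variable {V : Type*} [Fintype V] [DecidableEq V] (G : SimpleGraph V) (θ : V → ℕ)

open scoped Classical

lemma activated_mono {S S' : Set V} (h : S ⊆ S') {v : V} (hv : Activated G θ S v) :
    Activated G θ S' v := by
  induction hv with
  | base hv => exact .base (h hv)
  | step T hadj hcard hact ih => exact .step T hadj hcard ih

/-- number of neighbors of `v` inside `A` -/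
noncomputable def eIn (A : Finset V) (v : V) : ℕ := (A.filter (G.Adj v)).card

/-- edge boundary of `A` -/
noncomputable def bd (A : Finset V) : ℕ := ∑ u ∈ A, ((univ \ A).filter (G.Adj u)).card

lemma exists_next {S : Set V} (A : Finset V) (hSA : S ⊆ ↑A) (hne : A ≠ univ)
    (hperc : ∀ v, Activated G (fun _ => 3) S v) :
    ∃ v ∉ A, 3 ≤ eIn G A v := by
  have hA : ∀ w, Activated G (fun _ => 3) (↑A) w → w ∈ A ∨ ∃ v ∉ A, 3 ≤ eIn G A v := by
    intro w hw
    induction hw with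
    | base h => exact Or.inl h
    | @step w T hadj hcard hact ih =>
      by_cases hT : ∀ u ∈ T, u ∈ A
      · by_cases hwA : w ∈ A
        · exact Or.inl hwA
        · refine Or.inr ⟨w, hwA, ?_⟩
          calc (3 : ℕ) ≤ T.card := hcard
          _ ≤ (A.filter (G.Adj w)).card := by
              apply card_le_card
              intro u hu
              exact mem_filter.2 ⟨hT u hu, (hadj u hu).symm⟩
      · push_neg at hT
        obtain ⟨u, huT, huA⟩ := hT
        rcases ih u huT with h | h
        · exact absurd h huA
        · exact Or.inr h
  obtain ⟨w, hw⟩ : ∃ w, w ∉ A := by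
    by_contra h; push_neg at h
    exact hne (eq_univ_of_forall h)
  rcases hA w (activated_mono G _ hSA (hperc w)) with h | h
  · exact absurd h hw
  · exact h

lemma bd_insert (hreg : ∀ v, (univ.filter (G.Adj v)).card = 4) {A : Finset V} {v : V}
    (hv : v ∉ A) : bd G (insert v A) + 2 * eIn G A v = bd G A + 4 := by
  have hvu : v ∈ univ \ A := mem_sdiff.2 ⟨mem_univ v, hv⟩
  have hsplit : univ \ A = insert v (univ \ insert v A) := by
    ext x
    simp only [mem_sdiff, mem_univ, true_and, mem_insert]
    by_cases hx : x = v <;> simp [hx, hv]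
  have hvni : v ∉ univ \ insert v A := by simp
  -- (i) : sum over A
  have hterm : ∀ u ∈ A, ((univ \ A).filter (G.Adj u)).card
      = ((univ \ insert v A).filter (G.Adj u)).card + (if G.Adj v u then 1 else 0) := by
    intro u hu
    rw [hsplit, filter_insert]
    by_cases h : G.Adj u v
    · rw [if_pos h, card_insert_of_notMem (by simp [hvni]), G.adj_comm u v] at *
      simp [h]
    · rw [if_neg h, if_neg (fun hc => h hc.symm)]
      omega
  have hi : bd G A = (∑ u ∈ A, ((univ \ insert v A).filter (G.Adj u)).card) + eIn G A v := by
    unfold bd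
    rw [Finset.sum_congr rfl hterm, Finset.sum_add_distrib]
    congr 1
    rw [← Finset.card_filter]
    rfl
  -- (ii) : the v term
  have hii : ((univ \ insert v A).filter (G.Adj v)).card + eIn G A v = 4 := by
    have hpart : (univ.filter (G.Adj v)) = ((univ \ insert v A).filter (G.Adj v)) ∪ (A.filter (G.Adj v)) := by
      ext x
      constructor
      · intro hx
        have hadj : G.Adj v x := (mem_filter.1 hx).2
        by_cases hxA : x ∈ A
        · exact mem_union_right _ (mem_filter.2 ⟨hxA, hadj⟩)
        · refine mem_union_left _ (mem_filter.2 ⟨mem_sdiff.2 ⟨mem_univ x, ?_⟩, hadj⟩)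
          intro hc
          rcases mem_insert.1 hc with hc | hc
          · exact G.ne_of_adj hadj hc.symm
          · exact hxA hc
      · intro hx
        rcases mem_union.1 hx with hx | hx
        · exact mem_filter.2 ⟨mem_univ x, (mem_filter.1 hx).2⟩
        · exact mem_filter.2 ⟨mem_univ x, (mem_filter.1 hx).2⟩
    have hdisj : Disjoint ((univ \ insert v A).filter (G.Adj v)) (A.filter (G.Adj v)) := by
      apply Finset.disjoint_filter_filter
      apply Finset.disjoint_left.2
      intro x hx hx'
      exact (mem_sdiff.1 hx).2 (mem_insert_of_mem hx')
    have := hreg v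
    rw [hpart, card_union_of_disjoint hdisj] at this
    exact this
  -- combine
  have hbdi : bd G (insert v A) = ((univ \ insert v A).filter (G.Adj v)).card
      + ∑ u ∈ A, ((univ \ insert v A).filter (G.Adj u)).card := by
    unfold bd
    rw [Finset.sum_insert hv]
  omega

lemma bd_le (hreg : ∀ v, (univ.filter (G.Adj v)).card = 4) (A : Finset V) :
    bd G A ≤ 4 * A.card := by
  unfold bd
  calc ∑ u ∈ A, ((univ \ A).filter (G.Adj u)).card ≤ ∑ u ∈ A, 4 := by
        apply Finset.sum_le_sum
        intro u _
        rw [← hreg u]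
        exact card_le_card (filter_subset_filter _ (subset_univ _))
  _ = 4 * A.card := by rw [Finset.sum_const]; ring

lemma lower_general [Nonempty V] (S : Finset V)
    (hreg : ∀ v, (univ.filter (G.Adj v)).card = 4)
    (hperc : ∀ v, Activated G (fun _ => 3) (↑S) v) :
    Fintype.card V + 1 ≤ 3 * S.card := by
  have hpos : 0 < Fintype.card V := Fintype.card_pos
  by_cases hSu : S = univ
  · subst hSu
    rw [card_univ]
    omega
  · -- main induction
    have key : ∀ c (A : Finset V), (↑S : Set V) ⊆ ↑A → A ≠ univ → (univ \ A).card = c →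
        2 * c + 2 ≤ bd G A := by
      intro c
      induction c using Nat.strong_induction_on with
      | _ c ih =>
        intro A hSA hAne hc
        obtain ⟨v, hvA, hv3⟩ := exists_next G A hSA hAne hperc
        have h4 : eIn G A v ≤ 4 := by
          unfold eIn
          rw [← hreg v]
          exact card_le_card (filter_subset_filter _ (subset_univ _))
        have hbd := bd_insert G hreg hvA
        by_cases hins : insert v A = univ
        · -- last vertex
          have hAv : A = univ \ {v} := by
            apply Finset.eq_of_subset_of_card_le
            · intro x hx
              simp only [mem_sdiff, mem_univ, true_and, mem_singleton]
              exact fun h => hvA (h ▸ hx)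
            · have h1 : (insert v A).card = A.card + 1 := card_insert_of_notMem hvA
              have h2 : (univ \ {v} : Finset V).card = Fintype.card V - 1 := by
                rw [card_sdiff_of_subset (by simp), card_univ, card_singleton]
              rw [hins, card_univ] at h1
              omega
          have hc1 : c = 1 := by
            rw [← hc, hAv]
            have : univ \ (univ \ {v}) = ({v} : Finset V) := by
              simp
            rw [this, card_singleton]
          have hein4 : eIn G A v = 4 := by
            have hsub : univ.filter (G.Adj v) ⊆ A := by
              intro x hx
              rw [hAv]
              simp only [mem_sdiff, mem_univ, true_and, mem_singleton]
              exact fun h => G.ne_of_adj (mem_filter.1 hx).2 h.symm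
            have : univ.filter (G.Adj v) = A.filter (G.Adj v) := by
              apply Finset.Subset.antisymm
              · intro x hx
                exact mem_filter.2 ⟨hsub hx, (mem_filter.1 hx).2⟩
              · exact filter_subset_filter _ (subset_univ _)
            unfold eIn
            rw [← this, hreg]
          have hbd0 : bd G (insert v A) = 0 := by
            rw [hins]
            unfold bd
            simp
          omega
        · have hc' : (univ \ insert v A).card = c - 1 ∧ 1 ≤ c := by
            have h1 : univ \ A = insert v (univ \ insert v A) := by
              ext x
              simp only [mem_sdiff, mem_univ, true_and, mem_insert]
              by_cases hx : x = v <;> simp [hx, hvA]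
            have h2 : v ∉ univ \ insert v A := by simp
            rw [← hc, h1, card_insert_of_notMem h2]
            omega
          have hSA' : (↑S : Set V) ⊆ ↑(insert v A) := by
            intro x hx
            exact Finset.mem_coe.2 (mem_insert_of_mem (hSA hx))
          have := ih (c-1) (by omega) (insert v A) hSA' hins hc'.1
          omega
    have h2 := key (univ \ S).card S (by exact fun x hx => hx) hSu rfl
    have h3 := bd_le G hreg S
    have h4 : (univ \ S).card = Fintype.card V - S.card := by
      rw [card_sdiff_of_subset (subset_univ S), card_univ]
    have h5 : S.card ≤ Fintype.card V := by
      rw [← card_univ]; exact card_le_card (subset_univ S)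
    omega

end General


section Torus
open scoped Classical
variable {m n : ℕ} [NeZero m]

lemma zmod_one_ne_zero (hm : 5 ≤ m) : (1 : ZMod m) ≠ 0 := by
  intro h
  have : ((1 : ℕ) : ZMod m) = 0 := by exact_mod_cast h
  have := (ZMod.natCast_eq_zero_iff 1 m).1 this
  have := Nat.le_of_dvd one_pos this
  omega

lemma zmod_two_ne_zero (hm : 5 ≤ m) : (2 : ZMod m) ≠ 0 := by
  intro h
  have : ((2 : ℕ) : ZMod m) = 0 := by exact_mod_cast h
  have := (ZMod.natCast_eq_zero_iff 2 m).1 this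
  have := Nat.le_of_dvd two_pos this
  omega

lemma zmod_ne_add_one (hm : 5 ≤ m) (i : ZMod m) : i ≠ i + 1 := by
  intro h
  apply zmod_one_ne_zero hm
  calc (1 : ZMod m) = (i + 1) - i := by ring
  _ = i - i := by rw [← h]
  _ = 0 := sub_self i

lemma zmod_add_one_ne_sub_one (hm : 5 ≤ m) (i : ZMod m) : i + 1 ≠ i - 1 := by
  intro h
  apply zmod_two_ne_zero hm
  calc (2 : ZMod m) = (i + 1) - (i - 1) := by ring
  _ = (i - 1) - (i - 1) := by rw [← h]
  _ = 0 := sub_self _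

lemma tc_adjV (hm : 5 ≤ m) (i : ZMod m) (j : Fin n) :
    (torusCordalis m n).Adj (i, j) (i + 1, j) := by
  rw [torusCordalis, SimpleGraph.fromRel_adj]
  exact ⟨by simp [Prod.ext_iff]; intro h; exact zmod_one_ne_zero hm h,
    Or.inl (Or.inl ⟨rfl, rfl⟩)⟩

lemma tc_adjH (i : ZMod m) (j j' : Fin n) (h : (j' : ℕ) = (j : ℕ) + 1) :
    (torusCordalis m n).Adj (i, j) (i, j') := by
  rw [torusCordalis, SimpleGraph.fromRel_adj]
  refine ⟨?_, Or.inl (Or.inr (Or.inl ⟨rfl, h⟩))⟩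
  simp only [ne_eq, Prod.mk.injEq, not_and]
  intro _ hj
  rw [hj] at h
  omega

lemma tc_adjW (hm : 5 ≤ m) (i : ZMod m) (j j' : Fin n) (hj : (j : ℕ) = n - 1)
    (hj' : (j' : ℕ) = 0) (hn : 6 ≤ n) :
    (torusCordalis m n).Adj (i, j) (i + 1, j') := by
  rw [torusCordalis, SimpleGraph.fromRel_adj]
  refine ⟨?_, Or.inl (Or.inr (Or.inr ⟨hj, hj', rfl⟩))⟩
  simp only [ne_eq, Prod.mk.injEq, not_and]
  intro h
  exact (zmod_ne_add_one hm i h).elim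

/-- the four neighbours of a vertex -/
def rtN (v : ZMod m × Fin n) : ZMod m × Fin n :=
  if h : (v.2 : ℕ) + 1 < n then (v.1, ⟨(v.2 : ℕ) + 1, h⟩) else (v.1 + 1, ⟨0, v.2.pos⟩)

def lfN (v : ZMod m × Fin n) : ZMod m × Fin n :=
  if h : 0 < (v.2 : ℕ) then (v.1, ⟨(v.2 : ℕ) - 1, by omega⟩)
  else (v.1 - 1, ⟨n - 1, by have := v.2.pos; omega⟩)

lemma tc_adj_iff (hm : 5 ≤ m) (hn : 6 ≤ n) (i : ZMod m) (j : Fin n) (b : ZMod m × Fin n) :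
    (torusCordalis m n).Adj (i, j) b ↔
      b = (i + 1, j) ∨ b = (i - 1, j) ∨ b = rtN (i, j) ∨ b = lfN (i, j) := by
  constructor
  · intro hadj
    rw [torusCordalis, SimpleGraph.fromRel_adj] at hadj
    obtain ⟨hne, hrel⟩ := hadj
    dsimp only at hrel
    rcases hrel with (⟨h1, h2⟩ | ⟨h1, h2⟩ | ⟨h1, h2, h3⟩) | (⟨h1, h2⟩ | ⟨h1, h2⟩ | ⟨h1, h2, h3⟩)
    · exact Or.inl (Prod.ext h1 h2)
    · refine Or.inr (Or.inr (Or.inl ?_))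
      have hlt : (j : ℕ) + 1 < n := by rw [← h2]; exact b.2.isLt
      rw [rtN]
      simp only [dif_pos hlt]
      exact Prod.ext h1.symm (Fin.ext h2)
    · refine Or.inr (Or.inr (Or.inl ?_))
      have hnlt : ¬ ((j : ℕ) + 1 < n) := by omega
      rw [rtN]
      simp only [dif_neg hnlt]
      exact Prod.ext h3 (Fin.ext h2)
    · refine Or.inr (Or.inl ?_)
      refine Prod.ext ?_ h2.symm
      rw [h1]; ring
    · refine Or.inr (Or.inr (Or.inr ?_))
      have hpos : 0 < (j : ℕ) := by omega
      rw [lfN]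
      simp only [dif_pos hpos]
      refine Prod.ext h1 (Fin.ext ?_)
      simp only
      omega
    · refine Or.inr (Or.inr (Or.inr ?_))
      have hnpos : ¬ (0 < (j : ℕ)) := by omega
      rw [lfN]
      simp only [dif_neg hnpos]
      refine Prod.ext ?_ (Fin.ext ?_)
      · rw [h3]; ring
      · simp only
        omega
  · intro hb
    rcases hb with hb | hb | hb | hb
    · rw [hb]; exact tc_adjV hm i j
    · rw [hb]
      have := tc_adjV hm (i - 1) j
      rw [sub_add_cancel] at this
      exact this.symm
    · rw [hb, rtN]
      by_cases h : (j : ℕ) + 1 < n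
      · simp only [dif_pos h]
        exact tc_adjH i j _ rfl
      · simp only [dif_neg h]
        exact tc_adjW hm i j _ (by have := j.isLt; omega) rfl hn
    · rw [hb, lfN]
      by_cases h : 0 < (j : ℕ)
      · simp only [dif_pos h]
        exact (tc_adjH i _ j (by simp only; omega)).symm
      · simp only [dif_neg h]
        have := tc_adjW hm (i - 1) (⟨n - 1, by omega⟩ : Fin n) j (by simp) (by omega) hn
        rw [sub_add_cancel] at this
        exact this.symm

lemma tc_regular (hm : 5 ≤ m) (hn : 6 ≤ n) (v : ZMod m × Fin n) :
    (univ.filter ((torusCordalis m n).Adj v)).card = 4 := by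
  classical
  obtain ⟨i, j⟩ := v
  have hset : univ.filter ((torusCordalis m n).Adj (i, j))
      = {(i + 1, j), (i - 1, j), rtN (i, j), lfN (i, j)} := by
    ext b
    simp only [mem_filter, mem_univ, true_and, mem_insert, mem_singleton]
    exact tc_adj_iff hm hn i j b
  rw [hset]
  -- distinctness
  have hj := j.isLt
  have hab : ((i + 1, j) : ZMod m × Fin n) ≠ (i - 1, j) := by
    simp only [ne_eq, Prod.mk.injEq, not_and]
    intro h
    exact (zmod_add_one_ne_sub_one hm i h).elim
  have hac : ((i + 1, j) : ZMod m × Fin n) ≠ rtN (i, j) := by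
    rw [rtN]
    by_cases h : (j : ℕ) + 1 < n
    · simp only [dif_pos h, ne_eq, Prod.mk.injEq, not_and]
      intro _ hc
      have := congrArg Fin.val hc
      simp at this
      try omega
    · simp only [dif_neg h, ne_eq, Prod.mk.injEq, not_and]
      intro _ hc
      have := congrArg Fin.val hc
      simp at this
      try omega
  have had : ((i + 1, j) : ZMod m × Fin n) ≠ lfN (i, j) := by
    rw [lfN]
    by_cases h : 0 < (j : ℕ)
    · simp only [dif_pos h, ne_eq, Prod.mk.injEq, not_and]
      intro _ hc
      have := congrArg Fin.val hc
      simp at this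
      try omega
    · simp only [dif_neg h, ne_eq, Prod.mk.injEq, not_and]
      intro hc
      exact ((zmod_add_one_ne_sub_one hm i) hc).elim
  have hbc : ((i - 1, j) : ZMod m × Fin n) ≠ rtN (i, j) := by
    rw [rtN]
    by_cases h : (j : ℕ) + 1 < n
    · simp only [dif_pos h, ne_eq, Prod.mk.injEq, not_and]
      intro _ hc
      have := congrArg Fin.val hc
      simp at this
      try omega
    · simp only [dif_neg h, ne_eq, Prod.mk.injEq, not_and]
      intro hc
      exact ((zmod_add_one_ne_sub_one hm i) hc.symm).elim
  have hbd : ((i - 1, j) : ZMod m × Fin n) ≠ lfN (i, j) := by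
    rw [lfN]
    by_cases h : 0 < (j : ℕ)
    · simp only [dif_pos h, ne_eq, Prod.mk.injEq, not_and]
      intro _ hc
      have := congrArg Fin.val hc
      simp at this
      try omega
    · simp only [dif_neg h, ne_eq, Prod.mk.injEq, not_and]
      intro _ hc
      have := congrArg Fin.val hc
      simp at this
      try omega
  have hcd : rtN ((i, j) : ZMod m × Fin n) ≠ lfN (i, j) := by
    rw [rtN, lfN]
    by_cases h1 : (j : ℕ) + 1 < n <;> by_cases h2 : 0 < (j : ℕ)
    · simp only [dif_pos h1, dif_pos h2, ne_eq, Prod.mk.injEq, not_and]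
      intro _ hc
      have := congrArg Fin.val hc
      simp at this
      try omega
    · simp only [dif_pos h1, dif_neg h2, ne_eq, Prod.mk.injEq, not_and]
      intro hc
      exact (zmod_ne_add_one hm (i - 1) (by rw [sub_add_cancel]; exact hc.symm)).elim
    · simp only [dif_neg h1, dif_pos h2, ne_eq, Prod.mk.injEq, not_and]
      intro hc
      exact (zmod_ne_add_one hm i hc.symm).elim
    · omega
  rw [card_insert_of_notMem (by simp [hab, hac, had]),
    card_insert_of_notMem (by simp [hbc, hbd]),
    card_insert_of_notMem (by simp [hcd]), card_singleton]

end Torus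


section Upper
open scoped Classical
variable {m s : ℕ} [NeZero m]

lemma act_step3 {V : Type*} [DecidableEq V] {G : SimpleGraph V} {θ : V → ℕ} {S : Set V}
    {v a b c : V}
    (Ha : Activated G θ S a) (Hb : Activated G θ S b) (Hc : Activated G θ S c)
    (hab : a ≠ b) (hac : a ≠ c) (hbc : b ≠ c)
    (ha : G.Adj a v) (hb : G.Adj b v) (hc : G.Adj c v) (hθ : θ v ≤ 3) :
    Activated G θ S v := by
  refine Activated.step ({a, b, c} : Finset V) ?_ ?_ ?_
  · intro u hu
    simp only [mem_insert, mem_singleton] at hu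
    rcases hu with rfl | rfl | rfl <;> assumption
  · have h3 : ({a, b, c} : Finset V).card = 3 := by
      rw [card_insert_of_notMem (by simp [hab, hac]),
        card_insert_of_notMem (by simp [hbc]), card_singleton]
    omega
  · intro u hu
    simp only [mem_insert, mem_singleton] at hu
    rcases hu with rfl | rfl | rfl <;> assumption

/-- vertex constructor -/
def vx (m s : ℕ) [NeZero m] (r j : ℕ) (hj : j < 3 * s) : ZMod m × Fin (3 * s) :=
  ((r : ZMod m), ⟨j, hj⟩)

/-- the seed set -/
def seedSet (m s : ℕ) [NeZero m] : Finset (ZMod m × Fin (3 * s)) :=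
  univ.filter (fun p =>
    (p.2 : ℕ) % 3 = (if (p.1 : ZMod m).val = 0 then 0 else if (p.1 : ZMod m).val % 2 = 1 then 1 else 2)
    ∨ (p.1 = 0 ∧ (p.2 : ℕ) = 3 * s - 1))

lemma cast_succ (hm : 5 ≤ m) {r r' : ℕ} (h : r' = r + 1 ∨ (r = m - 1 ∧ r' = 0)) :
    ((r : ZMod m) + 1) = (r' : ZMod m) := by
  rcases h with rfl | ⟨rfl, rfl⟩
  · push_cast; ring
  · have h1 : ((m - 1 : ℕ) : ZMod m) + 1 = ((m - 1 + 1 : ℕ) : ZMod m) := by push_cast; ring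
    rw [h1, show m - 1 + 1 = m by omega, ZMod.natCast_self, Nat.cast_zero]

lemma vx_ne_j {r r' j j' : ℕ} {hj : j < 3 * s} {hj' : j' < 3 * s} (h : j ≠ j') :
    vx m s r j hj ≠ vx m s r' j' hj' := by
  intro hc
  apply h
  have := congrArg (fun p => ((p.2 : Fin (3 * s)) : ℕ)) hc
  simpa [vx] using this

lemma vx_ne_r {r r' j j' : ℕ} {hj : j < 3 * s} {hj' : j' < 3 * s}
    (hr : r < m) (hr' : r' < m) (h : r ≠ r') :
    vx m s r j hj ≠ vx m s r' j' hj' := by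
  intro hc
  apply h
  have h1 := congrArg Prod.fst hc
  simp only [vx] at h1
  have := congrArg ZMod.val h1
  rwa [ZMod.val_cast_of_lt hr, ZMod.val_cast_of_lt hr'] at this

lemma adjHgen {r j j' : ℕ} (hj : j < 3 * s) (hj' : j' < 3 * s) (h : j' = j + 1) :
    (torusCordalis m (3 * s)).Adj (vx m s r j hj) (vx m s r j' hj') :=
  tc_adjH (r : ZMod m) ⟨j, hj⟩ ⟨j', hj'⟩ h

lemma adjVgen (hm : 5 ≤ m) {r r' j : ℕ} (hj : j < 3 * s)
    (h : r' = r + 1 ∨ (r = m - 1 ∧ r' = 0)) :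
    (torusCordalis m (3 * s)).Adj (vx m s r j hj) (vx m s r' j hj) := by
  have := tc_adjV hm (r : ZMod m) (⟨j, hj⟩ : Fin (3 * s))
  rwa [cast_succ hm h] at this

lemma adjWgen (hm : 5 ≤ m) (hs : 2 ≤ s) {r r' : ℕ} (h1 : 3 * s - 1 < 3 * s) (h2 : 0 < 3 * s)
    (h : r' = r + 1 ∨ (r = m - 1 ∧ r' = 0)) :
    (torusCordalis m (3 * s)).Adj (vx m s r (3 * s - 1) h1) (vx m s r' 0 h2) := by
  have := tc_adjW hm (r : ZMod m) (⟨3 * s - 1, h1⟩ : Fin (3 * s)) (⟨0, h2⟩ : Fin (3 * s))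
    rfl rfl (by omega)
  rwa [cast_succ hm h] at this

lemma seed_mem (hm : 5 ≤ m) {r j : ℕ} (hr : r < m) (hj : j < 3 * s)
    (h : j % 3 = if r = 0 then 0 else if r % 2 = 1 then 1 else 2) :
    vx m s r j hj ∈ seedSet m s := by
  rw [seedSet, mem_filter]
  refine ⟨mem_univ _, Or.inl ?_⟩
  simp only [vx]
  simp only [ZMod.val_cast_of_lt hr]
  exact h

lemma seed_extra (hm : 5 ≤ m) (hs : 2 ≤ s) (h1 : 3 * s - 1 < 3 * s) :
    vx m s 0 (3 * s - 1) h1 ∈ seedSet m s := by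
  rw [seedSet, mem_filter]
  refine ⟨mem_univ _, Or.inr ⟨by simp [vx], by simp [vx]⟩⟩

lemma upper_perc (hm : 5 ≤ m) (hodd : m % 2 = 1) (hs : 2 ≤ s) :
    ∀ v, Activated (torusCordalis m (3 * s)) (fun _ => 3) (↑(seedSet m s)) v := by
  set G := torusCordalis m (3 * s) with hG
  set S := seedSet m s with hS
  have hn6 : 6 ≤ 3 * s := by omega
  -- abbreviation
  let A : ∀ (r j : ℕ), j < 3 * s → Prop := fun r j hj =>
    Activated G (fun _ => 3) (↑S) (vx m s r j hj)
  -- seeds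
  have aS : ∀ (r j : ℕ) (hr : r < m) (hj : j < 3 * s),
      j % 3 = (if r = 0 then 0 else if r % 2 = 1 then 1 else 2) → A r j hj :=
    fun r j hr hj h => Activated.base (seed_mem hm hr hj h)
  have aS0 : ∀ (j : ℕ) (hj : j < 3 * s), j % 3 = 0 → A 0 j hj :=
    fun j hj h => aS 0 j (by omega) hj (by simp [h])
  have aS1 : ∀ (r j : ℕ) (hr : r < m) (hr2 : r % 2 = 1) (hj : j < 3 * s), j % 3 = 1 → A r j hj :=
    fun r j hr hr2 hj h => aS r j hr hj (by rw [if_neg (by omega), if_pos hr2]; exact h)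
  have aS2 : ∀ (r j : ℕ) (hr : r < m) (hr0 : r ≠ 0) (hr2 : r % 2 = 0) (hj : j < 3 * s),
      j % 3 = 2 → A r j hj :=
    fun r j hr hr0 hr2 hj h => aS r j hr hj (by rw [if_neg hr0, if_neg (by omega)]; exact h)
  have aX : A 0 (3 * s - 1) (by omega) := Activated.base (seed_extra hm hs (by omega))
  -- round 1
  have L1a : ∀ (r j : ℕ), r % 2 = 0 → 2 ≤ r → r ≤ m - 3 → j % 3 = 1 → ∀ (hj : j < 3 * s),
      A r j hj := by
    intro r j hre hr2 hr3 hj3 hj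
    exact act_step3 (aS2 r (j+1) (by omega) (by omega) hre (by omega) (by omega)) (aS1 (r-1) j (by omega) (by omega) hj (by omega)) (aS1 (r+1) j (by omega) (by omega) hj (by omega)) (vx_ne_j (by omega)) (vx_ne_j (by omega)) (vx_ne_r (by omega) (by omega) (by omega)) (adjHgen (by omega) (by omega) (by omega)).symm (adjVgen hm (by omega) (Or.inl (by omega))) ((adjVgen hm (by omega) (Or.inl rfl)).symm) (by norm_num)
  have L1b : ∀ (r j : ℕ), r % 2 = 1 → 3 ≤ r → r ≤ m - 2 → j % 3 = 2 → ∀ (hj : j < 3 * s),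
      A r j hj := by
    intro r j hro hr3 hrm hj3 hj
    exact act_step3 (aS1 r (j-1) (by omega) hro (by omega) (by omega)) (aS2 (r-1) j (by omega) (by omega) (by omega) hj (by omega)) (aS2 (r+1) j (by omega) (by omega) (by omega) hj (by omega)) (vx_ne_j (by omega)) (vx_ne_j (by omega)) (vx_ne_r (by omega) (by omega) (by omega)) (adjHgen (by omega) (by omega) (by omega)) (adjVgen hm (by omega) (Or.inl (by omega))) ((adjVgen hm (by omega) (Or.inl rfl)).symm) (by norm_num)
  have L1c : A 0 (3 * s - 2) (by omega) := by
    exact act_step3 (aS0 (3 * s - 3) (by omega) (by omega)) aX (aS1 1 (3 * s - 2) (by omega) (by omega) (by omega) (by omega)) (vx_ne_j (by omega)) (vx_ne_j (by omega)) (vx_ne_r (by omega) (by omega) (by omega)) (adjHgen (by omega) (by omega) (by omega)) (adjHgen (by omega) (by omega) (by omega)).symm ((adjVgen hm (by omega) (Or.inl rfl)).symm) (by norm_num)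
  have L1d : A 1 0 (by omega) := by
    exact act_step3 (aS1 1 1 (by omega) (by omega) (by omega) (by omega)) (aS0 0 (by omega) (by omega)) aX (vx_ne_j (by omega)) (vx_ne_j (by omega)) (vx_ne_j (by omega)) (adjHgen (by omega) (by omega) (by omega)).symm (adjVgen hm (by omega) (Or.inl rfl)) (adjWgen hm hs (by omega) (by omega) (Or.inl rfl)) (by norm_num)
  have L1e : A 1 (3 * s - 1) (by omega) := by
    exact act_step3 (aS1 1 (3 * s - 2) (by omega) (by omega) (by omega) (by omega)) (aS2 2 (3 * s - 1) (by omega) (by omega) (by omega) (by omega) (by omega)) aX (vx_ne_j (by omega)) (vx_ne_r (by omega) (by omega) (by omega)) (vx_ne_r (by omega) (by omega) (by omega)) (adjHgen (by omega) (by omega) (by omega)) ((adjVgen hm (by omega) (Or.inl rfl)).symm) (adjVgen hm (by omega) (Or.inl rfl)) (by norm_num)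
  -- column 0 chain
  have L2 : ∀ r, 2 ≤ r → r ≤ m - 1 → A r 0 (by omega) := by
    intro r
    induction r using Nat.strong_induction_on with
    | _ r ih =>
      intro hr2 hrm
      by_cases hr : r = 2
      · subst hr
        exact act_step3 L1d (L1a 2 1 (by omega) (by omega) (by omega) (by omega) (by omega)) L1e (vx_ne_r (by omega) (by omega) (by omega)) (vx_ne_j (by omega)) (vx_ne_j (by omega)) (adjVgen hm (by omega) (Or.inl rfl)) (adjHgen (by omega) (by omega) (by omega)).symm (adjWgen hm hs (by omega) (by omega) (Or.inl rfl)) (by norm_num)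
      · -- r ≥ 3
        have hr3 : 3 ≤ r := by omega
        have hprev : A (r-1) 0 (by omega) := ih (r-1) (by omega) (by omega) (by omega)
        have hYact : A (r-1) (3 * s - 1) (by omega) := by
          by_cases hpar : (r - 1) % 2 = 0
          · exact aS2 (r-1) (3*s-1) (by omega) (by omega) hpar (by omega) (by omega)
          · exact L1b (r-1) (3*s-1) (by omega) (by omega) (by omega) (by omega) (by omega)
        by_cases hrtop : r = m - 1
        · subst hrtop
          exact act_step3 hprev (aS0 0 (by omega) (by omega)) hYact (vx_ne_r (by omega) (by omega) (by omega)) (vx_ne_j (by omega)) (vx_ne_j (by omega)) (adjVgen hm (by omega) (Or.inl (by omega))) ((adjVgen hm (by omega) (Or.inr ⟨rfl, rfl⟩)).symm) (adjWgen hm hs (by omega) (by omega) (Or.inl (by omega))) (by norm_num)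
        · have hXact : A r 1 (by omega) := by
            by_cases hpar : r % 2 = 1
            · exact aS1 r 1 (by omega) hpar (by omega) (by omega)
            · exact L1a r 1 (by omega) (by omega) (by omega) (by omega) (by omega)
          exact act_step3 hprev hXact hYact (vx_ne_j (by omega)) (vx_ne_j (by omega)) (vx_ne_j (by omega)) (adjVgen hm (by omega) (Or.inl (by omega))) (adjHgen (by omega) (by omega) (by omega)).symm (adjWgen hm hs (by omega) (by omega) (Or.inl (by omega))) (by norm_num)
  have L3 : A (m-1) 1 (by omega) := by
    exact act_step3 (L2 (m-1) (by omega) (by omega)) (aS2 (m-1) 2 (by omega) (by omega) (by omega) (by omega) (by omega)) (aS1 (m-2) 1 (by omega) (by omega) (by omega) (by omega)) (vx_ne_j (by omega)) (vx_ne_j (by omega)) (vx_ne_j (by omega)) (adjHgen (by omega) (by omega) (by omega)) (adjHgen (by omega) (by omega) (by omega)).symm (adjVgen hm (by omega) (Or.inl (by omega))) (by norm_num)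
  have L4 : A 0 1 (by omega) := by
    exact act_step3 (aS0 0 (by omega) (by omega)) (aS1 1 1 (by omega) (by omega) (by omega) (by omega)) L3 (vx_ne_j (by omega)) (vx_ne_r (by omega) (by omega) (by omega)) (vx_ne_r (by omega) (by omega) (by omega)) (adjHgen (by omega) (by omega) (by omega)) ((adjVgen hm (by omega) (Or.inl rfl)).symm) (adjVgen hm (by omega) (Or.inr ⟨rfl, rfl⟩)) (by norm_num)
  have L5 : A 0 2 (by omega) := by
    exact act_step3 L4 (aS0 3 (by omega) (by omega)) (aS2 (m-1) 2 (by omega) (by omega) (by omega) (by omega) (by omega)) (vx_ne_j (by omega)) (vx_ne_j (by omega)) (vx_ne_j (by omega)) (adjHgen (by omega) (by omega) (by omega)) (adjHgen (by omega) (by omega) (by omega)).symm (adjVgen hm (by omega) (Or.inr ⟨rfl, rfl⟩)) (by norm_num)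
  have L6 : A 1 2 (by omega) := by
    exact act_step3 (aS1 1 1 (by omega) (by omega) (by omega) (by omega)) L5 (aS2 2 2 (by omega) (by omega) (by omega) (by omega) (by omega)) (vx_ne_j (by omega)) (vx_ne_r (by omega) (by omega) (by omega)) (vx_ne_r (by omega) (by omega) (by omega)) (adjHgen (by omega) (by omega) (by omega)) (adjVgen hm (by omega) (Or.inl rfl)) ((adjVgen hm (by omega) (Or.inl rfl)).symm) (by norm_num)
  have L7 : A 1 3 (by omega) := by
    exact act_step3 L6 (aS1 1 4 (by omega) (by omega) (by omega) (by omega)) (aS0 3 (by omega) (by omega)) (vx_ne_j (by omega)) (vx_ne_j (by omega)) (vx_ne_j (by omega)) (adjHgen (by omega) (by omega) (by omega)) (adjHgen (by omega) (by omega) (by omega)).symm (adjVgen hm (by omega) (Or.inl rfl)) (by norm_num)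
  -- block machinery
  have Ba : ∀ k, 1 ≤ k → k ≤ s - 1 → (∀ h13, A 1 (3*k) h13) →
      ∀ r, 2 ≤ r → r ≤ m - 1 → ∀ (hj : 3*k < 3*s), A r (3*k) hj := by
    intro k hk1 hks h13 r
    induction r using Nat.strong_induction_on with
    | _ r ih =>
      intro hr2 hrm hj
      by_cases hr : r = 2
      · subst hr
        exact act_step3 (h13 (by omega)) (aS2 2 (3*k-1) (by omega) (by omega) (by omega) (by omega) (by omega)) (L1a 2 (3*k+1) (by omega) (by omega) (by omega) (by omega) (by omega)) (vx_ne_r (by omega) (by omega) (by omega)) (vx_ne_j (by omega)) (vx_ne_j (by omega)) (adjVgen hm (by omega) (Or.inl rfl)) (adjHgen (by omega) (by omega) (by omega)) (adjHgen (by omega) (by omega) (by omega)).symm (by norm_num)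
      · have hr3 : 3 ≤ r := by omega
        have hprev : A (r-1) (3*k) hj := ih (r-1) (by omega) (by omega) (by omega) hj
        by_cases hrtop : r = m - 1
        · subst hrtop
          exact act_step3 hprev (aS2 (m-1) (3*k-1) (by omega) (by omega) (by omega) (by omega) (by omega)) (aS0 (3*k) (by omega) (by omega)) (vx_ne_j (by omega)) (vx_ne_r (by omega) (by omega) (by omega)) (vx_ne_r (by omega) (by omega) (by omega)) (adjVgen hm (by omega) (Or.inl (by omega))) (adjHgen (by omega) (by omega) (by omega)) ((adjVgen hm (by omega) (Or.inr ⟨rfl, rfl⟩)).symm) (by norm_num)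
        · have hX : A r (3*k+1) (by omega) := by
            by_cases hpar : r % 2 = 1
            · exact aS1 r (3*k+1) (by omega) hpar (by omega) (by omega)
            · exact L1a r (3*k+1) (by omega) (by omega) (by omega) (by omega) (by omega)
          have hY : A r (3*k-1) (by omega) := by
            by_cases hpar : r % 2 = 1
            · exact L1b r (3*k-1) hpar (by omega) (by omega) (by omega) (by omega)
            · exact aS2 r (3*k-1) (by omega) (by omega) (by omega) (by omega) (by omega)
          exact act_step3 hprev hX hY (vx_ne_j (by omega)) (vx_ne_j (by omega)) (vx_ne_j (by omega)) (adjVgen hm (by omega) (Or.inl (by omega))) (adjHgen (by omega) (by omega) (by omega)).symm (adjHgen (by omega) (by omega) (by omega)) (by norm_num)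
  have Bb : ∀ k, 1 ≤ k → k ≤ s - 1 → (∀ h13, A 1 (3*k) h13) →
      ∀ (hj : 3*k+1 < 3*s), A (m-1) (3*k+1) hj := by
    intro k hk1 hks h13 hj
    exact act_step3 (Ba k hk1 hks h13 (m-1) (by omega) (by omega) (by omega)) (aS2 (m-1) (3*k+2) (by omega) (by omega) (by omega) (by omega) (by omega)) (aS1 (m-2) (3*k+1) (by omega) (by omega) (by omega) (by omega)) (vx_ne_j (by omega)) (vx_ne_j (by omega)) (vx_ne_j (by omega)) (adjHgen (by omega) (by omega) (by omega)) (adjHgen (by omega) (by omega) (by omega)).symm (adjVgen hm (by omega) (Or.inl (by omega))) (by norm_num)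
  have Bc : ∀ k, 1 ≤ k → k ≤ s - 1 → (∀ h13, A 1 (3*k) h13) →
      ∀ (hj : 3*k+1 < 3*s), A 0 (3*k+1) hj := by
    intro k hk1 hks h13 hj
    exact act_step3 (aS0 (3*k) (by omega) (by omega)) (aS1 1 (3*k+1) (by omega) (by omega) (by omega) (by omega)) (Bb k hk1 hks h13 hj) (vx_ne_j (by omega)) (vx_ne_r (by omega) (by omega) (by omega)) (vx_ne_r (by omega) (by omega) (by omega)) (adjHgen (by omega) (by omega) (by omega)) ((adjVgen hm (by omega) (Or.inl rfl)).symm) (adjVgen hm (by omega) (Or.inr ⟨rfl, rfl⟩)) (by norm_num)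
  have Bd : ∀ k, 1 ≤ k → k ≤ s - 1 → (∀ h13, A 1 (3*k) h13) →
      ∀ (hj : 3*k+2 < 3*s), A 0 (3*k+2) hj := by
    intro k hk1 hks h13 hj
    by_cases hlast : k = s - 1
    · -- 3k+2 = 3s-1 : use wrap neighbour (1,0)
      have hj' : 3*k+2 = 3*s - 1 := by omega
      exact act_step3 (Bc k hk1 hks h13 (by omega)) (aS2 (m-1) (3*k+2) (by omega) (by omega) (by omega) (by omega) (by omega)) L1d (vx_ne_j (by omega)) (vx_ne_j (by omega)) (vx_ne_j (by omega)) (adjHgen (by omega) (by omega) (by omega)) (adjVgen hm (by omega) (Or.inr ⟨rfl, rfl⟩)) (by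
          have := adjWgen hm hs (s := s) (r := 0) (r' := 1) (by omega) (by omega) (Or.inl rfl)
          have hv : vx m s 0 (3*s-1) (by omega) = vx m s 0 (3*k+2) hj := by
            simp [vx, Fin.ext_iff]; omega
          rw [hv] at this
          exact this.symm) (by norm_num)
    · exact act_step3 (Bc k hk1 hks h13 (by omega)) (aS0 (3*k+3) (by omega) (by omega)) (aS2 (m-1) (3*k+2) (by omega) (by omega) (by omega) (by omega) (by omega)) (vx_ne_j (by omega)) (vx_ne_j (by omega)) (vx_ne_r (by omega) (by omega) (by omega)) (adjHgen (by omega) (by omega) (by omega)) (adjHgen (by omega) (by omega) (by omega)).symm (adjVgen hm (by omega) (Or.inr ⟨rfl, rfl⟩)) (by norm_num)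
  have Be : ∀ k, 1 ≤ k → k ≤ s - 1 → (∀ h13, A 1 (3*k) h13) →
      ∀ (hj : 3*k+2 < 3*s), A 1 (3*k+2) hj := by
    intro k hk1 hks h13 hj
    exact act_step3 (aS1 1 (3*k+1) (by omega) (by omega) (by omega) (by omega)) (Bd k hk1 hks h13 hj) (aS2 2 (3*k+2) (by omega) (by omega) (by omega) (by omega) (by omega)) (vx_ne_j (by omega)) (vx_ne_r (by omega) (by omega) (by omega)) (vx_ne_r (by omega) (by omega) (by omega)) (adjHgen (by omega) (by omega) (by omega)) (adjVgen hm (by omega) (Or.inl rfl)) ((adjVgen hm (by omega) (Or.inl rfl)).symm) (by norm_num)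
  -- master induction on k
  have Blk : ∀ k, 1 ≤ k → k ≤ s - 1 → ∀ (hj : 3*k < 3*s), A 1 (3*k) hj := by
    intro k
    induction k using Nat.strong_induction_on with
    | _ k ih =>
      intro hk1 hks hj
      by_cases hk : k = 1
      · subst hk
        exact L7
      · have hkm : 2 ≤ k := by omega
        have hPrev : ∀ h13, A 1 (3*(k-1)) h13 := fun h13 =>
          ih (k-1) (by omega) (by omega) (by omega) h13
        -- Bf step : A 1 (3(k-1)+3) = A 1 (3k)
        have hBe := Be (k-1) (by omega) (by omega) hPrev (by omega)
        exact act_step3 hBe (aS1 1 (3*k+1) (by omega) (by omega) (by omega) (by omega)) (aS0 (3*k) (by omega) (by omega)) (vx_ne_j (by omega)) (vx_ne_j (by omega)) (vx_ne_j (by omega)) (by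
            have := adjHgen (s := s) (m := m) (r := 1) (j := 3*(k-1)+2) (j' := 3*(k-1)+3)
              (by omega) (by omega) (by omega)
            have hv : vx m s 1 (3*(k-1)+3) (by omega) = vx m s 1 (3*k) hj := by
              simp [vx, Fin.ext_iff]; omega
            rw [hv] at this
            exact this) (by
            have := (adjHgen (s := s) (m := m) (r := 1) (j := 3*k) (j' := 3*k+1)
              hj (by omega) (by omega)).symm
            exact this) (by
            have := adjVgen hm (s := s) (r := 0) (r' := 1) (j := 3*k) hj (Or.inl rfl)
            exact this) (by norm_num)
  -- coverage
  have H13 : ∀ k, 1 ≤ k → ∀ (h13 : 3*k < 3*s), A 1 (3*k) h13 := by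
    intro k hk1 h13
    exact Blk k hk1 (by omega) h13
  have main : ∀ (r j : ℕ) (hr : r < m) (hj : j < 3 * s), A r j hj := by
    intro r j hr hj
    rcases Nat.lt_trichotomy r 2 with hr01 | hr2
    · -- r = 0 or 1
      interval_cases r
      · -- row 0
        rcases Nat.lt_trichotomy (j % 3) 1 with h3 | h3
        · exact aS0 j hj (by omega)
        rcases h3 with h3 | h3
        · -- j % 3 = 1
          by_cases hj1 : j = 1
          · subst hj1; exact L4
          · obtain ⟨k, rfl, hk1⟩ : ∃ k, j = 3*k+1 ∧ 1 ≤ k := ⟨j/3, by omega, by omega⟩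
            exact Bc k hk1 (by omega) (H13 k hk1) hj
        · -- j % 3 = 2
          have h32 : j % 3 = 2 := by omega
          by_cases hj2 : j = 2
          · subst hj2; exact L5
          · obtain ⟨k, rfl, hk1⟩ : ∃ k, j = 3*k+2 ∧ 1 ≤ k := ⟨j/3, by omega, by omega⟩
            exact Bd k hk1 (by omega) (H13 k hk1) hj
      · -- row 1
        rcases Nat.lt_trichotomy (j % 3) 1 with h3 | h3
        · -- j % 3 = 0
          by_cases hj0 : j = 0
          · subst hj0; exact L1d
          · obtain ⟨k, rfl, hk1⟩ : ∃ k, j = 3*k ∧ 1 ≤ k := ⟨j/3, by omega, by omega⟩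
            exact H13 k hk1 hj
        rcases h3 with h3 | h3
        · exact aS1 1 j (by omega) (by omega) hj h3
        · have h32 : j % 3 = 2 := by omega
          by_cases hj2 : j = 2
          · subst hj2; exact L6
          · by_cases hjlast : j = 3 * s - 1
            · subst hjlast; exact L1e
            · obtain ⟨k, rfl, hk1⟩ : ∃ k, j = 3*k+2 ∧ 1 ≤ k := ⟨j/3, by omega, by omega⟩
              exact Be k hk1 (by omega) (H13 k hk1) hj
    · -- 2 ≤ r ≤ m-1
      have hr2' : 2 ≤ r := by omega
      have hrm : r ≤ m - 1 := by omega
      rcases Nat.lt_trichotomy (j % 3) 1 with h3 | h3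
      · -- j % 3 = 0
        by_cases hj0 : j = 0
        · subst hj0; exact L2 r hr2' hrm
        · obtain ⟨k, rfl, hk1⟩ : ∃ k, j = 3*k ∧ 1 ≤ k := ⟨j/3, by omega, by omega⟩
          exact Ba k hk1 (by omega) (H13 k hk1) r hr2' hrm hj
      rcases h3 with h3 | h3
      · -- j % 3 = 1
        by_cases hpar : r % 2 = 1
        · exact aS1 r j hr hpar hj h3
        · by_cases hrtop : r = m - 1
          · subst hrtop
            by_cases hj1 : j = 1
            · subst hj1; exact L3
            · obtain ⟨k, rfl, hk1⟩ : ∃ k, j = 3*k+1 ∧ 1 ≤ k := ⟨j/3, by omega, by omega⟩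
              exact Bb k hk1 (by omega) (H13 k hk1) hj
          · exact L1a r j (by omega) hr2' (by omega) h3 hj
      · -- j % 3 = 2
        have h32 : j % 3 = 2 := by omega
        by_cases hpar : r % 2 = 1
        · exact L1b r j hpar (by omega) (by omega) h32 hj
        · exact aS2 r j hr (by omega) (by omega) hj h32
  intro v
  obtain ⟨i, jf⟩ := v
  have hveq : ((i : ZMod m), jf) = vx m s i.val jf.val jf.isLt := by
    simp [vx, ZMod.natCast_zmod_val, Fin.ext_iff]
  rw [hveq]
  exact main i.val jf.val i.val_lt jf.isLt

end Upper


section Card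
open scoped Classical
variable {m s : ℕ} [NeZero m]

lemma cnt3 (hs : 2 ≤ s) (c : ℕ) (hc : c < 3) :
    ((univ : Finset (Fin (3 * s))).filter (fun j : Fin (3 * s) => (j : ℕ) % 3 = c)).card = s := by
  have key : ((univ : Finset (Fin (3 * s))).filter (fun j : Fin (3 * s) => (j : ℕ) % 3 = c)).card
      = (range s).card := by
    refine Finset.card_bij' (fun a _ => (a : ℕ) / 3) (fun b hb => (⟨3 * b + c, by
      have := mem_range.1 hb; omega⟩ : Fin (3 * s))) ?_ ?_ ?_ ?_
    · intro a ha
      have h1 : (a : ℕ) % 3 = c := (mem_filter.1 ha).2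
      have h2 : (a : ℕ) < 3 * s := a.isLt
      exact mem_range.2 (by show (a : ℕ)/3 < s; omega)
    · intro b hb
      have := mem_range.1 hb
      simp only [mem_filter, mem_univ, true_and]
      omega
    · intro a ha
      have h1 : (a : ℕ) % 3 = c := (mem_filter.1 ha).2
      exact Fin.ext (by simp; omega)
    · intro b hb
      have := mem_range.1 hb
      simp
      omega
  rw [key, card_range]

lemma seed_card (hm : 5 ≤ m) (hs : 2 ≤ s) : (seedSet m s).card = m * s + 1 := by
  have hfib : (seedSet m s).card
      = ∑ i : ZMod m, ((seedSet m s).filter (fun p => p.1 = i)).card :=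
    card_eq_sum_card_fiberwise (fun p _ => mem_univ p.1)
  rw [hfib]
  have hrow : ∀ i : ZMod m, ((seedSet m s).filter (fun p => p.1 = i)).card
      = if i = 0 then s + 1 else s := by
    intro i
    have hbij : ((seedSet m s).filter (fun p => p.1 = i)).card
        = ((univ : Finset (Fin (3 * s))).filter (fun j : Fin (3 * s) =>
            (j : ℕ) % 3 = (if i.val = 0 then 0 else if i.val % 2 = 1 then 1 else 2)
            ∨ (i = 0 ∧ (j : ℕ) = 3 * s - 1))).card := by
      refine Finset.card_bij' (fun p _ => p.2) (fun j _ => (i, j)) ?_ ?_ ?_ ?_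
      · intro p hp
        simp only [seedSet, mem_filter, mem_univ, true_and] at hp ⊢
        obtain ⟨hcond, hfst⟩ := hp
        rw [← hfst]
        exact hcond
      · intro j hj
        simp only [seedSet, mem_filter, mem_univ, true_and] at hj ⊢
        exact ⟨hj, trivial⟩
      · intro p hp
        simp only [mem_filter] at hp
        exact Prod.ext hp.2.symm rfl
      · intro j hj
        rfl
    rw [hbij]
    by_cases hi : i = 0
    · subst hi
      rw [if_pos rfl]
      have hzero : (0 : ZMod m).val = 0 := ZMod.val_zero
      have hcongr : ((univ : Finset (Fin (3 * s))).filter (fun j : Fin (3 * s) =>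
          (j : ℕ) % 3 = (if (0 : ZMod m).val = 0 then 0 else if (0 : ZMod m).val % 2 = 1 then 1 else 2)
          ∨ ((0 : ZMod m) = 0 ∧ (j : ℕ) = 3 * s - 1)))
          = ((univ : Finset (Fin (3 * s))).filter (fun j : Fin (3 * s) =>
            (j : ℕ) % 3 = 0 ∨ (j : ℕ) = 3 * s - 1)) := by
        apply filter_congr
        intro j _
        rw [hzero, if_pos rfl]
        simp
      rw [hcongr, filter_or]
      have hsingle : ((univ : Finset (Fin (3 * s))).filter (fun j : Fin (3 * s) =>
          (j : ℕ) = 3 * s - 1)) = {(⟨3 * s - 1, by omega⟩ : Fin (3 * s))} := by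
        ext j
        simp [Fin.ext_iff]
      rw [hsingle, card_union_of_disjoint, cnt3 hs 0 (by omega), card_singleton]
      rw [disjoint_singleton_right]
      simp only [mem_filter, mem_univ, true_and]
      omega
    · rw [if_neg hi]
      have hival : i.val ≠ 0 := fun h => hi ((ZMod.val_eq_zero i).1 h)
      have hcongr : ((univ : Finset (Fin (3 * s))).filter (fun j : Fin (3 * s) =>
          (j : ℕ) % 3 = (if i.val = 0 then 0 else if i.val % 2 = 1 then 1 else 2)
          ∨ (i = 0 ∧ (j : ℕ) = 3 * s - 1)))
          = ((univ : Finset (Fin (3 * s))).filter (fun j : Fin (3 * s) =>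
            (j : ℕ) % 3 = (if i.val % 2 = 1 then 1 else 2))) := by
        apply filter_congr
        intro j _
        rw [if_neg hival]
        constructor
        · rintro (h | ⟨h, -⟩)
          · exact h
          · exact absurd h hi
        · exact Or.inl
      rw [hcongr]
      by_cases hpar : i.val % 2 = 1
      · rw [if_pos hpar]
        exact cnt3 hs 1 (by omega)
      · rw [if_neg hpar]
        exact cnt3 hs 2 (by omega)
  calc ∑ i : ZMod m, ((seedSet m s).filter (fun p => p.1 = i)).card
      = ∑ i : ZMod m, (if i = 0 then s + 1 else s) :=
        Finset.sum_congr rfl (fun i _ => hrow i)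
  _ = ∑ i : ZMod m, ((if i = 0 then 1 else 0) + s) := by
        apply Finset.sum_congr rfl
        intro i _
        by_cases hi : i = 0 <;> simp [hi] <;> omega
  _ = (∑ i : ZMod m, (if i = 0 then 1 else 0)) + (∑ _i : ZMod m, s) := Finset.sum_add_distrib
  _ = 1 + m * s := by
        rw [Finset.sum_ite_eq' univ (0 : ZMod m) (fun _ => 1)]
        simp [ZMod.card, mul_comm]
  _ = m * s + 1 := by ring
end Card

/-- If `m ≥ 5` is odd and `s ≥ 2`, then `min-seed(C_m ⊘ C_{3s}, 3) = ms + 1`. -/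

theorem minSeed_torusCordalis_odd (m s : ℕ) [NeZero m] (hm : 5 ≤ m) (hodd : Odd m)
    (hs : 2 ≤ s) :
    minSeed (torusCordalis m (3 * s)) (fun _ => 3) = m * s + 1 := by
  classical
  have hmod : m % 2 = 1 := Nat.odd_iff.1 hodd
  have hn6 : 6 ≤ 3 * s := by omega
  have hperc := upper_perc (m := m) (s := s) hm hmod hs
  have hcard := seed_card (m := m) (s := s) hm hs
  have hmem : m * s + 1 ∈ {k | ∃ S : Finset (ZMod m × Fin (3 * s)), S.card = k ∧
      ∀ v, Activated (torusCordalis m (3 * s)) (fun _ => 3) (↑S) v} :=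
    ⟨seedSet m s, hcard, hperc⟩
  apply le_antisymm
  · exact Nat.sInf_le hmem
  · apply le_csInf ⟨_, hmem⟩
    rintro k ⟨S, rfl, hp⟩
    haveI : Nonempty (ZMod m × Fin (3 * s)) := ⟨(0, ⟨0, by omega⟩)⟩
    have hlow := lower_general (torusCordalis m (3 * s)) S
      (fun v => tc_regular hm hn6 v) hp
    have hcardV : Fintype.card (ZMod m × Fin (3 * s)) = m * (3 * s) := by
      rw [Fintype.card_prod, ZMod.card, Fintype.card_fin]
    have hmul : m * (3 * s) = 3 * (m * s) := by ring
    omega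
end
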